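/- arXiv:1911.10405 — 4 statements merged into one kernel-verified Lean document; each statement's English description precedes it below -/
import Mathlib

section
/- (Gindikin–Karpelevich Finiteness, Theorem 1.3, type A_{n−1} instance.) For all λ, μ ∈ ℤⁿ, the set of left K-cosets K\(K·π^{μ}·U⁺ ∩ K·π^{λ}·U⁻) is finite; moreover it is empty unless μ ≤ λ, i.e., unless λ − μ is a nonnegative integer combination of the simple coroots e_i − e_{i+1} (1 ≤ i ≤ n−1). -/
open Matrix Pointwise

set_option maxHeartbeats 1600000

noncomputable section

/-- `π^μ = diag(p^{μ_1},…,p^{μ_n})` as an element of `GL_n(ℚ_p)`. -/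
def piPow (p : ℕ) [Fact p.Prime] (n : ℕ) (μ : Fin n → ℤ) : GL (Fin n) ℚ_[p] where
  val := diagonal fun i => (p : ℚ_[p]) ^ (μ i)
  inv := diagonal fun i => (p : ℚ_[p]) ^ (-μ i)
  val_inv := by
    have hp : (p : ℚ_[p]) ≠ 0 := Nat.cast_ne_zero.mpr (Fact.out : p.Prime).ne_zero
    rw [diagonal_mul_diagonal]
    have h : (fun i => (p : ℚ_[p]) ^ (μ i) * (p : ℚ_[p]) ^ (-μ i)) = fun _ => (1 : ℚ_[p]) := by
      funext i; rw [← zpow_add₀ hp]; simp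
    rw [h, diagonal_one]
  inv_val := by
    have hp : (p : ℚ_[p]) ≠ 0 := Nat.cast_ne_zero.mpr (Fact.out : p.Prime).ne_zero
    rw [diagonal_mul_diagonal]
    have h : (fun i => (p : ℚ_[p]) ^ (-μ i) * (p : ℚ_[p]) ^ (μ i)) = fun _ => (1 : ℚ_[p]) := by
      funext i; rw [← zpow_add₀ hp]; simp
    rw [h, diagonal_one]

/-- `K = GL_n(ℤ_p)`: matrices with entries in `ℤ_p` whose determinant is a unit of `ℤ_p`. -/
def Kgp (p : ℕ) [Fact p.Prime] (n : ℕ) : Set (GL (Fin n) ℚ_[p]) :=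
  {g | (∀ i j, ‖(g : Matrix (Fin n) (Fin n) ℚ_[p]) i j‖ ≤ 1) ∧
    ‖(g : Matrix (Fin n) (Fin n) ℚ_[p]).det‖ = 1}

/-- `U⁺`: upper triangular unipotent matrices. -/
def Uplus (p : ℕ) [Fact p.Prime] (n : ℕ) : Set (GL (Fin n) ℚ_[p]) :=
  {g | (∀ i, (g : Matrix (Fin n) (Fin n) ℚ_[p]) i i = 1) ∧
    ∀ i j : Fin n, j < i → (g : Matrix (Fin n) (Fin n) ℚ_[p]) i j = 0}

/-- `U⁻`: lower triangular unipotent matrices. -/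
def Uminus (p : ℕ) [Fact p.Prime] (n : ℕ) : Set (GL (Fin n) ℚ_[p]) :=
  {g | (∀ i, (g : Matrix (Fin n) (Fin n) ℚ_[p]) i i = 1) ∧
    ∀ i j : Fin n, i < j → (g : Matrix (Fin n) (Fin n) ℚ_[p]) i j = 0}

/-- The simple coroot `e_i − e_{i+1}` (0-indexed `i`), as a vector in `ℤⁿ`. -/
def simpleCoroot (n : ℕ) (i : ℕ) : Fin n → ℤ :=
  fun j => (if (j : ℕ) = i then 1 else 0) - (if (j : ℕ) = i + 1 then 1 else 0)

/-- Dominance order: `μ ≤ λ` iff `λ − μ` is a nonnegative integral combination of the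
simple coroots `e_i − e_{i+1}`, `1 ≤ i ≤ n−1`. -/
def domLE (n : ℕ) (μ lam : Fin n → ℤ) : Prop :=
  ∃ c : ℕ → ℕ,
    (fun j => lam j - μ j) = ∑ i ∈ Finset.range (n - 1), fun j => (c i : ℤ) * simpleCoroot n i j

/-- The permutation matrix of `w ∈ S_n` as an element of `GL_n(ℚ_p)`; the assignment
`w ↦ permGL p n w` is a group embedding of `S_n` into `GL_n(ℚ_p)`. -/
def permGL (p : ℕ) [Fact p.Prime] (n : ℕ) (w : Equiv.Perm (Fin n)) : GL (Fin n) ℚ_[p] where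
  val := (w⁻¹).permMatrix ℚ_[p]
  inv := w.permMatrix ℚ_[p]
  val_inv := by
    show ((w⁻¹).toPEquiv.toMatrix : Matrix (Fin n) (Fin n) ℚ_[p]) * w.toPEquiv.toMatrix = 1
    rw [← PEquiv.toMatrix_trans, ← Equiv.toPEquiv_trans]
    have h : Equiv.trans w⁻¹ w = Equiv.refl (Fin n) := by ext x; simp
    rw [h, Equiv.toPEquiv_refl, PEquiv.toMatrix_refl]
  inv_val := by
    show (w.toPEquiv.toMatrix : Matrix (Fin n) (Fin n) ℚ_[p]) * (w⁻¹).toPEquiv.toMatrix = 1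
    rw [← PEquiv.toMatrix_trans, ← Equiv.toPEquiv_trans]
    have h : Equiv.trans w w⁻¹ = Equiv.refl (Fin n) := by ext x; simp
    rw [h, Equiv.toPEquiv_refl, PEquiv.toMatrix_refl]

/-- Coxeter length of a permutation: the number of inversions. -/
def permLength (n : ℕ) (w : Equiv.Perm (Fin n)) : ℕ :=
  ((Finset.univ : Finset (Fin n × Fin n)).filter fun q => q.1 < q.2 ∧ w q.2 < w q.1).card

end


open Matrix Finset

namespace GK

variable {p : ℕ} [Fact p.Prime]

lemma one_lt_pR : (1:ℝ) < p := by exact_mod_cast (Fact.out : p.Prime).one_lt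

lemma pR_pos : (0:ℝ) < p := lt_trans one_pos one_lt_pR

lemma norm_sum_le' {ι : Type*} (s : Finset ι) (f : ι → ℚ_[p]) {C : ℝ} (hC : 0 ≤ C)
    (h : ∀ i ∈ s, ‖f i‖ ≤ C) : ‖∑ i ∈ s, f i‖ ≤ C := by
  classical
  induction s using Finset.induction with
  | empty => simpa using hC
  | insert a s hx ih =>
    rw [Finset.sum_insert hx]
    refine le_trans (Padic.nonarchimedean _ _) (max_le (h _ (Finset.mem_insert_self _ _))
      (ih fun i hi => h i (Finset.mem_insert_of_mem hi)))

lemma norm_det_le {ι : Type*} [Fintype ι] [DecidableEq ι] (M : Matrix ι ι ℚ_[p]) {C : ℝ}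
    (hC : 0 ≤ C) (h : ∀ i j, ‖M i j‖ ≤ C) : ‖M.det‖ ≤ C ^ (Fintype.card ι) := by
  rw [Matrix.det_apply]
  refine norm_sum_le' _ _ (pow_nonneg hC _) fun σ _ => ?_
  have h1 : ‖Equiv.Perm.sign σ • ∏ i, M (σ i) i‖ = ‖∏ i, M (σ i) i‖ := by
    rcases Int.units_eq_one_or (Equiv.Perm.sign σ) with hs | hs <;> rw [hs] <;> simp
  rw [h1]
  calc ‖∏ i, M (σ i) i‖ = ∏ i, ‖M (σ i) i‖ := by
        simpa using norm_prod (Finset.univ) (fun i => M (σ i) i)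
    _ ≤ ∏ _i : ι, C := Finset.prod_le_prod (fun i _ => norm_nonneg _)
        (fun i _ => h (σ i) i)
    _ = C ^ (Fintype.card ι) := by simp [Finset.prod_const, Finset.card_univ]

lemma norm_mul_entry_le {n : ℕ} (M N : Matrix (Fin n) (Fin n) ℚ_[p]) {C D : ℝ}
    (hC : 0 ≤ C) (hD : 0 ≤ D) (hM : ∀ i j, ‖M i j‖ ≤ C) (hN : ∀ i j, ‖N i j‖ ≤ D) :
    ∀ i j, ‖(M * N) i j‖ ≤ C * D := by
  intro i j
  rw [Matrix.mul_apply]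
  refine norm_sum_le' _ _ (mul_nonneg hC hD) fun l _ => ?_
  rw [Padic.padicNormE.mul]
  exact mul_le_mul (hM i l) (hN l j) (norm_nonneg _) hC

lemma norm_adjugate_le {n : ℕ} (M : Matrix (Fin n) (Fin n) ℚ_[p]) {C : ℝ} (hC : 1 ≤ C)
    (h : ∀ i j, ‖M i j‖ ≤ C) : ∀ i j, ‖M.adjugate i j‖ ≤ C ^ n := by
  intro i j
  rw [Matrix.adjugate_apply]
  have := norm_det_le (M.updateRow j (Pi.single i 1)) (le_trans zero_le_one hC) (fun a b => ?side)
  · simpa using this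
  case side =>
    rw [Matrix.updateRow_apply]
    split
    · rcases eq_or_ne i b with rfl | hb
      · simpa using hC
      · simp [Pi.single_apply, hb, le_trans zero_le_one hC]
    · exact h a b

lemma prod_zpow_eq {ι : Type*} (s : Finset ι) (f : ι → ℤ) :
    ∏ i ∈ s, (p:ℝ) ^ (f i) = (p:ℝ) ^ (∑ i ∈ s, f i) := by
  classical
  induction s using Finset.induction with
  | empty => simp
  | insert a s hx ih =>
    rw [Finset.prod_insert hx, Finset.sum_insert hx, ih, zpow_add₀ (ne_of_gt pR_pos)]


variable {p : ℕ} [Fact p.Prime] {n : ℕ}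

/-- weight used in the induction -/
def w (n : ℕ) (l : Fin n) : ℤ := 2 ^ (n - 1 - l.val) - 1

lemma w_nonneg (l : Fin n) : 0 ≤ w n l := by
  have : (1:ℤ) ≤ 2 ^ (n - 1 - l.val) := one_le_pow₀ (by norm_num)
  simp only [w]; linarith

lemma w_ge {m l : Fin n} (h : m < l) : 2 * w n l + 1 ≤ w n m := by
  have h2 : n - 1 - l.val + 1 ≤ n - 1 - m.val := by
    have := l.isLt; have := m.isLt; have : m.val < l.val := h; omega
  have h3 : (2:ℤ) ^ (n - 1 - l.val) * 2 ≤ 2 ^ (n - 1 - m.val) := by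
    calc (2:ℤ) ^ (n - 1 - l.val) * 2 = 2 ^ (n - 1 - l.val + 1) := (pow_succ 2 _).symm
      _ ≤ 2 ^ (n - 1 - m.val) := pow_le_pow_right₀ (by norm_num) h2
  simp only [w]; linarith

lemma lemmaA (φ ψ : Fin n → ℤ) (T : ℤ) (hT0 : T ≤ 0) (hT : ∀ t, T ≤ φ t - ψ t)
    (a b : Matrix (Fin n) (Fin n) ℚ_[p])
    (ha0 : ∀ i j : Fin n, j < i → a i j = 0) (ha1 : ∀ i, a i i = 1)
    (hb0 : ∀ i j : Fin n, i < j → b i j = 0) (hb1 : ∀ i, b i i = 1)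
    (hab : ∀ i j, ‖(a * b) i j‖ ≤ (p:ℝ) ^ (ψ i - φ j)) :
    ∀ m : Fin n,
      (∀ i : Fin n, i < m → ‖a i m‖ ≤ (p:ℝ) ^ (ψ i - φ m - w n m * T)) ∧
      (∀ j : Fin n, j < m → ‖b m j‖ ≤ (p:ℝ) ^ (ψ m - φ j - w n m * T)) := by
  suffices key : ∀ k : ℕ, ∀ m : Fin n, n - 1 - m.val = k →
      (∀ i : Fin n, i < m → ‖a i m‖ ≤ (p:ℝ) ^ (ψ i - φ m - w n m * T)) ∧
      (∀ j : Fin n, j < m → ‖b m j‖ ≤ (p:ℝ) ^ (ψ m - φ j - w n m * T)) by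
    intro m; exact key _ m rfl
  intro k
  induction k using Nat.strong_induction_on with
  | _ k ih =>
  intro m hm
  have hpne : ((p:ℝ)) ≠ 0 := ne_of_gt pR_pos
  have hwmT : w n m * T ≤ 0 := mul_nonpos_iff.mpr (Or.inl ⟨w_nonneg m, hT0⟩)
  have hQ : ∀ l : Fin n, m < l →
      (∀ i : Fin n, i < l → ‖a i l‖ ≤ (p:ℝ) ^ (ψ i - φ l - w n l * T)) ∧
      (∀ j : Fin n, j < l → ‖b l j‖ ≤ (p:ℝ) ^ (ψ l - φ j - w n l * T)) := by
    intro l hl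
    refine ih (n - 1 - l.val) ?_ l rfl
    have h1 : m.val < l.val := hl
    have := l.isLt
    omega
  have exp_le : ∀ l : Fin n, m < l → ∀ c d : ℤ,
      (c - φ l - w n l * T) + (ψ l - d - w n l * T) ≤ c - d - w n m * T := by
    intro l hl c d
    have h1 : w n m * T ≤ (2 * w n l + 1) * T :=
      mul_le_mul_of_nonpos_right (w_ge hl) hT0
    have h2 := hT l
    linarith
  constructor
  · intro i him
    have hdecomp : a i m = (a * b) i m - ∑ l ∈ Finset.univ.filter (fun l => m < l), a i l * b l m := by
      have hmul : (a * b) i m = ∑ l, a i l * b l m := Matrix.mul_apply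
      have hzero : ∀ l ∈ Finset.univ, l ∉ Finset.univ.filter (fun l => m ≤ l) →
          a i l * b l m = 0 := by
        intro l _ hl
        have hlm : l < m := by simpa using hl
        rw [hb0 l m hlm, mul_zero]
      have hsub : ∑ l ∈ Finset.univ.filter (fun l => m ≤ l), a i l * b l m
          = ∑ l, a i l * b l m :=
        Finset.sum_subset (Finset.subset_univ _) hzero
      have hins : Finset.univ.filter (fun l => m ≤ l)
          = insert m (Finset.univ.filter (fun l => m < l)) := by
        ext l
        simp only [Finset.mem_filter, Finset.mem_univ, true_and, Finset.mem_insert]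
        constructor
        · intro h; rcases eq_or_lt_of_le h with h | h
          · exact Or.inl h.symm
          · exact Or.inr h
        · rintro (rfl | h); · exact le_refl _
          · exact le_of_lt h
      have hnotmem : m ∉ Finset.univ.filter (fun l => m < l) := by simp
      rw [hmul, ← hsub, hins, Finset.sum_insert hnotmem, hb1 m, mul_one]
      ring
    rw [hdecomp]
    have h1 : ‖(a * b) i m - ∑ l ∈ Finset.univ.filter (fun l => m < l), a i l * b l m‖
        ≤ max ‖(a * b) i m‖ ‖∑ l ∈ Finset.univ.filter (fun l => m < l), a i l * b l m‖ := by
      rw [sub_eq_add_neg]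
      refine le_trans (Padic.nonarchimedean _ _) ?_
      rw [norm_neg]
    refine le_trans h1 (max_le ?_ ?_)
    · refine le_trans (hab i m) ?_
      rw [zpow_le_zpow_iff_right₀ one_lt_pR]
      linarith [hwmT]
    · refine norm_sum_le' _ _ (le_of_lt (zpow_pos pR_pos _)) fun l hl => ?_
      have hml : m < l := by simpa using hl
      have hQl := hQ l hml
      have hal : ‖a i l‖ ≤ (p:ℝ) ^ (ψ i - φ l - w n l * T) := hQl.1 i (lt_trans him hml)
      have hbl : ‖b l m‖ ≤ (p:ℝ) ^ (ψ l - φ m - w n l * T) := hQl.2 m hml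
      rw [Padic.padicNormE.mul]
      calc ‖a i l‖ * ‖b l m‖
          ≤ (p:ℝ) ^ (ψ i - φ l - w n l * T) * (p:ℝ) ^ (ψ l - φ m - w n l * T) :=
            mul_le_mul hal hbl (norm_nonneg _) (le_of_lt (zpow_pos pR_pos _))
        _ = (p:ℝ) ^ ((ψ i - φ l - w n l * T) + (ψ l - φ m - w n l * T)) :=
            (zpow_add₀ hpne _ _).symm
        _ ≤ (p:ℝ) ^ (ψ i - φ m - w n m * T) := by
            rw [zpow_le_zpow_iff_right₀ one_lt_pR]
            exact exp_le l hml (ψ i) (φ m)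
  · intro j hjm
    have hdecomp : b m j = (a * b) m j - ∑ l ∈ Finset.univ.filter (fun l => m < l), a m l * b l j := by
      have hmul : (a * b) m j = ∑ l, a m l * b l j := Matrix.mul_apply
      have hzero : ∀ l ∈ Finset.univ, l ∉ Finset.univ.filter (fun l => m ≤ l) →
          a m l * b l j = 0 := by
        intro l _ hl
        have hlm : l < m := by simpa using hl
        rw [ha0 m l hlm, zero_mul]
      have hsub : ∑ l ∈ Finset.univ.filter (fun l => m ≤ l), a m l * b l j
          = ∑ l, a m l * b l j :=
        Finset.sum_subset (Finset.subset_univ _) hzero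
      have hins : Finset.univ.filter (fun l => m ≤ l)
          = insert m (Finset.univ.filter (fun l => m < l)) := by
        ext l
        simp only [Finset.mem_filter, Finset.mem_univ, true_and, Finset.mem_insert]
        constructor
        · intro h; rcases eq_or_lt_of_le h with h | h
          · exact Or.inl h.symm
          · exact Or.inr h
        · rintro (rfl | h); · exact le_refl _
          · exact le_of_lt h
      have hnotmem : m ∉ Finset.univ.filter (fun l => m < l) := by simp
      rw [hmul, ← hsub, hins, Finset.sum_insert hnotmem, ha1 m, one_mul]
      ring
    rw [hdecomp]
    have h1 : ‖(a * b) m j - ∑ l ∈ Finset.univ.filter (fun l => m < l), a m l * b l j‖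
        ≤ max ‖(a * b) m j‖ ‖∑ l ∈ Finset.univ.filter (fun l => m < l), a m l * b l j‖ := by
      rw [sub_eq_add_neg]
      refine le_trans (Padic.nonarchimedean _ _) ?_
      rw [norm_neg]
    refine le_trans h1 (max_le ?_ ?_)
    · refine le_trans (hab m j) ?_
      rw [zpow_le_zpow_iff_right₀ one_lt_pR]
      linarith [hwmT]
    · refine norm_sum_le' _ _ (le_of_lt (zpow_pos pR_pos _)) fun l hl => ?_
      have hml : m < l := by simpa using hl
      have hQl := hQ l hml
      have hal : ‖a m l‖ ≤ (p:ℝ) ^ (ψ m - φ l - w n l * T) := hQl.1 m hml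
      have hbl : ‖b l j‖ ≤ (p:ℝ) ^ (ψ l - φ j - w n l * T) := hQl.2 j (lt_trans hjm hml)
      rw [Padic.padicNormE.mul]
      calc ‖a m l‖ * ‖b l j‖
          ≤ (p:ℝ) ^ (ψ m - φ l - w n l * T) * (p:ℝ) ^ (ψ l - φ j - w n l * T) :=
            mul_le_mul hal hbl (norm_nonneg _) (le_of_lt (zpow_pos pR_pos _))
        _ = (p:ℝ) ^ ((ψ m - φ l - w n l * T) + (ψ l - φ j - w n l * T)) :=
            (zpow_add₀ hpne _ _).symm
        _ ≤ (p:ℝ) ^ (ψ m - φ j - w n m * T) := by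
            rw [zpow_le_zpow_iff_right₀ one_lt_pR]
            exact exp_le l hml (ψ m) (φ j)




section Kfacts

variable {p : ℕ} [Fact p.Prime] {n : ℕ}

lemma K_one_mem : (1 : GL (Fin n) ℚ_[p]) ∈ Kgp p n := by
  constructor
  · intro i j
    rcases eq_or_ne i j with rfl | h
    · simp [Matrix.one_apply_eq]
    · simp [Matrix.one_apply_ne h]
  · simp

lemma K_mul_mem {g h : GL (Fin n) ℚ_[p]} (hg : g ∈ Kgp p n) (hh : h ∈ Kgp p n) :
    g * h ∈ Kgp p n := by
  obtain ⟨hg1, hg2⟩ := hg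
  obtain ⟨hh1, hh2⟩ := hh
  refine ⟨?_, ?_⟩
  · intro i j
    have := norm_mul_entry_le (g : Matrix (Fin n) (Fin n) ℚ_[p])
      (h : Matrix (Fin n) (Fin n) ℚ_[p]) zero_le_one zero_le_one hg1 hh1 i j
    rw [Matrix.GeneralLinearGroup.coe_mul]
    simpa using this
  · rw [Matrix.GeneralLinearGroup.coe_mul, Matrix.det_mul, Padic.padicNormE.mul, hg2, hh2, one_mul]

lemma K_inv_mem {g : GL (Fin n) ℚ_[p]} (hg : g ∈ Kgp p n) : g⁻¹ ∈ Kgp p n := by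
  obtain ⟨hg1, hg2⟩ := hg
  have hcoe : ((g⁻¹ : GL (Fin n) ℚ_[p]) : Matrix (Fin n) (Fin n) ℚ_[p])
      = (g : Matrix (Fin n) (Fin n) ℚ_[p])⁻¹ := Matrix.GeneralLinearGroup.coe_inv g
  have h1 : ‖Ring.inverse (g : Matrix (Fin n) (Fin n) ℚ_[p]).det‖ = 1 := by
    rw [Ring.inverse_eq_inv', norm_inv, hg2, inv_one]
  constructor
  · intro i j
    rw [hcoe, Matrix.inv_def, Matrix.smul_apply, smul_eq_mul, Padic.padicNormE.mul, h1, one_mul]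
    have := norm_adjugate_le (g : Matrix (Fin n) (Fin n) ℚ_[p]) le_rfl hg1 i j
    simpa using this
  · rw [hcoe, Matrix.det_nonsing_inv, Ring.inverse_eq_inv', norm_inv, hg2, inv_one]

lemma mem_KxU {x : GL (Fin n) ℚ_[p]} {U : Set (GL (Fin n) ℚ_[p])} {g : GL (Fin n) ℚ_[p]} :
    g ∈ Kgp p n * {x} * U ↔ ∃ k ∈ Kgp p n, ∃ u ∈ U, g = k * x * u := by
  constructor
  · intro hg
    obtain ⟨y, hy, u, hu, rfl⟩ := Set.mem_mul.1 hg
    rw [Set.mul_singleton] at hy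
    obtain ⟨k, hk, rfl⟩ := hy
    exact ⟨k, hk, u, hu, rfl⟩
  · rintro ⟨k, hk, u, hu, rfl⟩
    refine Set.mem_mul.2 ⟨k * x, ?_, u, hu, rfl⟩
    rw [Set.mul_singleton]
    exact ⟨k, hk, rfl⟩

lemma self_mem_coset (g : GL (Fin n) ℚ_[p]) : g ∈ Kgp p n * {g} := by
  rw [Set.mul_singleton]
  exact ⟨1, K_one_mem, one_mul g⟩

lemma coset_eq {k g : GL (Fin n) ℚ_[p]} (hk : k ∈ Kgp p n) :
    Kgp p n * {k * g} = Kgp p n * {g} := by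
  rw [Set.mul_singleton, Set.mul_singleton]
  ext x
  constructor
  · rintro ⟨k', hk', rfl⟩
    exact ⟨k' * k, K_mul_mem hk' hk, by show k' * k * g = k' * (k * g); rw [mul_assoc]⟩
  · rintro ⟨k', hk', rfl⟩
    exact ⟨k' * k⁻¹, K_mul_mem hk' (K_inv_mem hk), by
      show k' * k⁻¹ * (k * g) = k' * g
      rw [mul_assoc, inv_mul_cancel_left]⟩

end Kfacts


section Bounds

variable {p : ℕ} [Fact p.Prime] {n : ℕ}

lemma piPow_coe (μ : Fin n → ℤ) :
    ((piPow p n μ : GL (Fin n) ℚ_[p]) : Matrix (Fin n) (Fin n) ℚ_[p])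
      = diagonal (fun i => (p : ℚ_[p]) ^ (μ i)) := rfl

lemma piPow_inv_coe (μ : Fin n → ℤ) :
    (((piPow p n μ)⁻¹ : GL (Fin n) ℚ_[p]) : Matrix (Fin n) (Fin n) ℚ_[p])
      = diagonal (fun i => (p : ℚ_[p]) ^ (-μ i)) := rfl

lemma uminus_inv_facts {u : GL (Fin n) ℚ_[p]} (hu : u ∈ Uminus p n) :
    (∀ i, ((u⁻¹ : GL (Fin n) ℚ_[p]) : Matrix (Fin n) (Fin n) ℚ_[p]) i i = 1) ∧
    (∀ i j : Fin n, i < j → ((u⁻¹ : GL (Fin n) ℚ_[p]) : Matrix (Fin n) (Fin n) ℚ_[p]) i j = 0) := by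
  obtain ⟨hu1, hu0⟩ := hu
  haveI : Invertible (u : Matrix (Fin n) (Fin n) ℚ_[p]) := u.invertible
  have hbt : ((u : Matrix (Fin n) (Fin n) ℚ_[p])).BlockTriangular (OrderDual.toDual) := by
    intro i j hij
    exact hu0 i j hij
  have hbtinv := Matrix.blockTriangular_inv_of_blockTriangular hbt
  have hcoe : ((u⁻¹ : GL (Fin n) ℚ_[p]) : Matrix (Fin n) (Fin n) ℚ_[p])
      = (u : Matrix (Fin n) (Fin n) ℚ_[p])⁻¹ := Matrix.GeneralLinearGroup.coe_inv u
  have hzero : ∀ i j : Fin n, i < j →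
      ((u⁻¹ : GL (Fin n) ℚ_[p]) : Matrix (Fin n) (Fin n) ℚ_[p]) i j = 0 := by
    intro i j hij
    rw [hcoe]
    exact hbtinv hij
  refine ⟨?_, hzero⟩
  intro i
  have hone : (u : Matrix (Fin n) (Fin n) ℚ_[p])
      * ((u⁻¹ : GL (Fin n) ℚ_[p]) : Matrix (Fin n) (Fin n) ℚ_[p]) = 1 := by
    rw [← Matrix.GeneralLinearGroup.coe_mul, mul_inv_cancel]
    rfl
  have h1 : (1 : Matrix (Fin n) (Fin n) ℚ_[p]) i i = 1 := Matrix.one_apply_eq i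
  rw [← hone, Matrix.mul_apply] at h1
  rw [← h1]
  rw [Finset.sum_eq_single i]
  · rw [hu1 i, one_mul]
  · intro l _ hl
    rcases lt_or_gt_of_ne hl with h | h
    · rw [hzero l i ?_, mul_zero]
      exact h
    · rw [hu0 i l ?_, zero_mul]
      exact h
  · intro h
    exact absurd (Finset.mem_univ i) h

lemma uplus_det_one {u : GL (Fin n) ℚ_[p]} (hu : u ∈ Uplus p n) :
    (u : Matrix (Fin n) (Fin n) ℚ_[p]).det = 1 := by
  obtain ⟨hu1, hu0⟩ := hu
  have hbt : ((u : Matrix (Fin n) (Fin n) ℚ_[p])).BlockTriangular id := by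
    intro i j hij
    exact hu0 i j hij
  rw [Matrix.det_of_upperTriangular hbt]
  simp [hu1]

lemma uplus_inv_coe {u : GL (Fin n) ℚ_[p]} (hu : u ∈ Uplus p n) :
    ((u⁻¹ : GL (Fin n) ℚ_[p]) : Matrix (Fin n) (Fin n) ℚ_[p])
      = Matrix.adjugate (u : Matrix (Fin n) (Fin n) ℚ_[p]) := by
  have h1 : (u : Matrix (Fin n) (Fin n) ℚ_[p])
      * Matrix.adjugate (u : Matrix (Fin n) (Fin n) ℚ_[p]) = 1 := by
    rw [Matrix.mul_adjugate, uplus_det_one hu, one_smul]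
  rw [Matrix.GeneralLinearGroup.coe_inv, Matrix.inv_eq_right_inv h1]

lemma det_norm_muside {g k u : GL (Fin n) ℚ_[p]} {μ : Fin n → ℤ} (hk : k ∈ Kgp p n)
    (hu : u ∈ Uplus p n) (hg : g = k * piPow p n μ * u) :
    ‖(g : Matrix (Fin n) (Fin n) ℚ_[p]).det‖ = (p:ℝ) ^ (-(∑ i, μ i)) := by
  rw [hg, Matrix.GeneralLinearGroup.coe_mul, Matrix.GeneralLinearGroup.coe_mul,
    Matrix.det_mul, Matrix.det_mul, Padic.padicNormE.mul, Padic.padicNormE.mul, hk.2, uplus_det_one hu,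
    one_mul, norm_one, mul_one, piPow_coe, Matrix.det_diagonal]
  rw [norm_prod]
  have : ∀ i ∈ Finset.univ, ‖(p:ℚ_[p]) ^ (μ i)‖ = (p:ℝ) ^ (-μ i) := by
    intro i _
    exact Padic.norm_p_zpow (μ i)
  rw [Finset.prod_congr rfl this, prod_zpow_eq]
  rw [← Finset.sum_neg_distrib]

end Bounds


section UB

variable {p : ℕ} [Fact p.Prime] {n : ℕ}

lemma uplus_entry_bound (hn : 0 < n) (lam μ : Fin n → ℤ) :
    ∃ E : ℤ, 0 ≤ E ∧ ∀ (k upl umi : GL (Fin n) ℚ_[p]),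
      k ∈ Kgp p n → upl ∈ Uplus p n → umi ∈ Uminus p n →
      piPow p n μ * upl = k * piPow p n lam * umi →
      ∀ i j, ‖(upl : Matrix (Fin n) (Fin n) ℚ_[p]) i j‖ ≤ (p:ℝ) ^ E := by
  haveI : Nonempty (Fin n) := ⟨⟨0, hn⟩⟩
  have hne : (Finset.univ : Finset (Fin n)).Nonempty := Finset.univ_nonempty
  have hne2 : (Finset.univ : Finset (Fin n × Fin n)).Nonempty := Finset.univ_nonempty
  set T : ℤ := Finset.univ.inf' hne (fun t => min 0 (lam t - μ t)) with hTdef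
  have hT0 : T ≤ 0 := le_trans (Finset.inf'_le _ (Finset.mem_univ ⟨0, hn⟩)) (min_le_left _ _)
  have hT : ∀ t, T ≤ lam t - μ t :=
    fun t => le_trans (Finset.inf'_le _ (Finset.mem_univ t)) (min_le_right _ _)
  set E : ℤ := max 0 (Finset.univ.sup' hne2
    (fun ij : Fin n × Fin n => μ ij.1 - lam ij.2 - w n ij.2 * T)) with hEdef
  refine ⟨E, le_max_left _ _, ?_⟩
  intro k upl umi hk hupl humi heq
  -- the product relation
  have h2 : upl * umi⁻¹ = (piPow p n μ)⁻¹ * (k * piPow p n lam) := by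
    have h3 : piPow p n μ * (upl * umi⁻¹) = k * piPow p n lam := by
      rw [← mul_assoc, heq, mul_assoc, mul_inv_cancel, mul_one]
    rw [← h3, inv_mul_cancel_left]
  set a : Matrix (Fin n) (Fin n) ℚ_[p] := (upl : Matrix (Fin n) (Fin n) ℚ_[p]) with hadef
  set b : Matrix (Fin n) (Fin n) ℚ_[p]
    := ((umi⁻¹ : GL (Fin n) ℚ_[p]) : Matrix (Fin n) (Fin n) ℚ_[p]) with hbdef
  have hab : ∀ i j, ‖(a * b) i j‖ ≤ (p:ℝ) ^ (μ i - lam j) := by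
    intro i j
    have hcoe : a * b = ((upl * umi⁻¹ : GL (Fin n) ℚ_[p]) : Matrix (Fin n) (Fin n) ℚ_[p]) :=
      (Matrix.GeneralLinearGroup.coe_mul _ _).symm
    rw [hcoe, h2, Matrix.GeneralLinearGroup.coe_mul, piPow_inv_coe,
      Matrix.GeneralLinearGroup.coe_mul, piPow_coe, Matrix.diagonal_mul, Matrix.mul_diagonal,
      Padic.padicNormE.mul, Padic.padicNormE.mul, Padic.norm_p_zpow, Padic.norm_p_zpow, neg_neg]
    have hk1 := hk.1 i j
    calc (p:ℝ) ^ (μ i) * (‖(k : Matrix (Fin n) (Fin n) ℚ_[p]) i j‖ * (p:ℝ) ^ (-lam j))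
        ≤ (p:ℝ) ^ (μ i) * (1 * (p:ℝ) ^ (-lam j)) := by
          refine mul_le_mul_of_nonneg_left ?_ (le_of_lt (zpow_pos pR_pos _))
          exact mul_le_mul_of_nonneg_right hk1 (le_of_lt (zpow_pos pR_pos _))
      _ = (p:ℝ) ^ (μ i - lam j) := by
          rw [one_mul, ← zpow_add₀ (ne_of_gt pR_pos), sub_eq_add_neg]
  have humi' := uminus_inv_facts humi
  have hA := lemmaA lam μ T hT0 hT a b
    (fun i j hij => hupl.2 i j hij) (fun i => hupl.1 i)
    (fun i j hij => humi'.2 i j hij) (fun i => humi'.1 i) hab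
  intro i j
  rcases lt_trichotomy i j with hij | rfl | hij
  · refine le_trans ((hA j).1 i hij) ?_
    rw [zpow_le_zpow_iff_right₀ one_lt_pR]
    refine le_trans ?_ (le_max_right _ _)
    exact Finset.le_sup' (f := fun ij : Fin n × Fin n => μ ij.1 - lam ij.2 - w n ij.2 * T)
      (Finset.mem_univ (i, j))
  · rw [hadef, hupl.1 i, norm_one]
    calc (1:ℝ) = (p:ℝ) ^ (0:ℤ) := by simp
      _ ≤ (p:ℝ) ^ E := by
        rw [zpow_le_zpow_iff_right₀ one_lt_pR]
        exact le_max_left _ _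
  · rw [hadef, hupl.2 i j hij, norm_zero]
    exact le_of_lt (zpow_pos pR_pos _)

end UB


section BD

variable {p : ℕ} [Fact p.Prime] {n : ℕ}

lemma bounded (hn : 0 < n) (lam μ : Fin n → ℤ) :
    ∃ C : ℝ, 1 ≤ C ∧ ∀ g ∈ (Kgp p n * {piPow p n μ} * Uplus p n) ∩
        (Kgp p n * {piPow p n lam} * Uminus p n),
      (∀ i j, ‖(g : Matrix (Fin n) (Fin n) ℚ_[p]) i j‖ ≤ C) ∧
      (∀ i j, ‖((g⁻¹ : GL (Fin n) ℚ_[p]) : Matrix (Fin n) (Fin n) ℚ_[p]) i j‖ ≤ C) := by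
  haveI : Nonempty (Fin n) := ⟨⟨0, hn⟩⟩
  have hne : (Finset.univ : Finset (Fin n)).Nonempty := Finset.univ_nonempty
  obtain ⟨E, hE0, hEbd⟩ := uplus_entry_bound (p := p) hn lam μ
  set E1 : ℤ := max 0 (Finset.univ.sup' hne (fun i => -μ i)) with hE1def
  set E2 : ℤ := max 0 (Finset.univ.sup' hne μ) with hE2def
  have hD1 : (1:ℝ) ≤ (p:ℝ) ^ E1 := by
    calc (1:ℝ) = (p:ℝ) ^ (0:ℤ) := by simp
      _ ≤ _ := by rw [zpow_le_zpow_iff_right₀ one_lt_pR]; exact le_max_left _ _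
  have hD2 : (1:ℝ) ≤ (p:ℝ) ^ E2 := by
    calc (1:ℝ) = (p:ℝ) ^ (0:ℤ) := by simp
      _ ≤ _ := by rw [zpow_le_zpow_iff_right₀ one_lt_pR]; exact le_max_left _ _
  have hPE : (1:ℝ) ≤ (p:ℝ) ^ E := by
    calc (1:ℝ) = (p:ℝ) ^ (0:ℤ) := by simp
      _ ≤ _ := by rw [zpow_le_zpow_iff_right₀ one_lt_pR]; exact hE0
  set C1 : ℝ := (p:ℝ) ^ E1 * (p:ℝ) ^ E with hC1def
  set C2 : ℝ := ((p:ℝ) ^ E) ^ n * (p:ℝ) ^ E2 with hC2def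
  have hC1pos : (1:ℝ) ≤ C1 := by
    calc (1:ℝ) = 1 * 1 := (one_mul 1).symm
      _ ≤ C1 := mul_le_mul hD1 hPE zero_le_one (le_trans zero_le_one hD1)
  have hC2pos : (1:ℝ) ≤ C2 := by
    have := one_le_pow₀ hPE (n := n)
    calc (1:ℝ) = 1 * 1 := (one_mul 1).symm
      _ ≤ C2 := mul_le_mul this hD2 zero_le_one (le_trans zero_le_one this)
  refine ⟨max C1 C2, le_trans hC1pos (le_max_left _ _), ?_⟩
  rintro g ⟨hgp, hgm⟩
  obtain ⟨k1, hk1, u1, hu1, hg1⟩ := mem_KxU.1 hgp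
  obtain ⟨k2, hk2, u2, hu2, hg2⟩ := mem_KxU.1 hgm
  have heq : piPow p n μ * u1 = (k1⁻¹ * k2) * piPow p n lam * u2 := by
    have h0 : k1 * (piPow p n μ * u1) = k2 * piPow p n lam * u2 := by
      rw [← mul_assoc, ← hg1, hg2]
    calc piPow p n μ * u1 = k1⁻¹ * (k1 * (piPow p n μ * u1)) := by rw [inv_mul_cancel_left]
      _ = k1⁻¹ * (k2 * piPow p n lam * u2) := by rw [h0]
      _ = (k1⁻¹ * k2) * piPow p n lam * u2 := by
          rw [mul_assoc, mul_assoc, mul_assoc]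
  have hkK : k1⁻¹ * k2 ∈ Kgp p n := K_mul_mem (K_inv_mem hk1) hk2
  have hu1bd : ∀ i j, ‖(u1 : Matrix (Fin n) (Fin n) ℚ_[p]) i j‖ ≤ (p:ℝ) ^ E :=
    hEbd _ u1 u2 hkK hu1 hu2 heq
  have hdiag1 : ∀ i j, ‖(diagonal (fun i => (p : ℚ_[p]) ^ (μ i)) : Matrix (Fin n) (Fin n) ℚ_[p]) i j‖
      ≤ (p:ℝ) ^ E1 := by
    intro i j
    rcases eq_or_ne i j with rfl | hij
    · rw [Matrix.diagonal_apply_eq, Padic.norm_p_zpow]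
      rw [zpow_le_zpow_iff_right₀ one_lt_pR]
      exact le_trans (Finset.le_sup' (f := fun i => -μ i) (Finset.mem_univ i)) (le_max_right _ _)
    · rw [Matrix.diagonal_apply_ne _ hij, norm_zero]
      exact le_of_lt (zpow_pos pR_pos _)
  have hdiag2 : ∀ i j, ‖(diagonal (fun i => (p : ℚ_[p]) ^ (-μ i)) : Matrix (Fin n) (Fin n) ℚ_[p]) i j‖
      ≤ (p:ℝ) ^ E2 := by
    intro i j
    rcases eq_or_ne i j with rfl | hij
    · rw [Matrix.diagonal_apply_eq, Padic.norm_p_zpow, neg_neg]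
      rw [zpow_le_zpow_iff_right₀ one_lt_pR]
      exact le_trans (Finset.le_sup' (f := μ) (Finset.mem_univ i)) (le_max_right _ _)
    · rw [Matrix.diagonal_apply_ne _ hij, norm_zero]
      exact le_of_lt (zpow_pos pR_pos _)
  constructor
  · intro i j
    refine le_trans ?_ (le_max_left C1 C2)
    rw [hg1, Matrix.GeneralLinearGroup.coe_mul, Matrix.GeneralLinearGroup.coe_mul, piPow_coe]
    have hmid := norm_mul_entry_le (diagonal (fun i => (p : ℚ_[p]) ^ (μ i)))
      (u1 : Matrix (Fin n) (Fin n) ℚ_[p])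
      (le_trans zero_le_one hD1) (le_trans zero_le_one hPE) hdiag1 hu1bd
    have hres := norm_mul_entry_le (k1 : Matrix (Fin n) (Fin n) ℚ_[p])
      (diagonal (fun i => (p : ℚ_[p]) ^ (μ i)) * (u1 : Matrix (Fin n) (Fin n) ℚ_[p]))
      zero_le_one (mul_nonneg (le_trans zero_le_one hD1) (le_trans zero_le_one hPE))
      hk1.1 hmid i j
    rw [← Matrix.mul_assoc] at hres
    calc ‖((k1 : Matrix (Fin n) (Fin n) ℚ_[p]) * diagonal (fun i => (p : ℚ_[p]) ^ (μ i))
          * (u1 : Matrix (Fin n) (Fin n) ℚ_[p])) i j‖ ≤ 1 * ((p:ℝ) ^ E1 * (p:ℝ) ^ E) := hres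
      _ = C1 := by rw [one_mul]
  · intro i j
    refine le_trans ?_ (le_max_right C1 C2)
    have hginv : g⁻¹ = u1⁻¹ * (piPow p n μ)⁻¹ * k1⁻¹ := by
      rw [hg1]
      rw [_root_.mul_inv_rev, _root_.mul_inv_rev]
      rw [mul_assoc]
    rw [hginv, Matrix.GeneralLinearGroup.coe_mul, Matrix.GeneralLinearGroup.coe_mul,
      piPow_inv_coe, uplus_inv_coe hu1]
    have hadj : ∀ a b, ‖(Matrix.adjugate (u1 : Matrix (Fin n) (Fin n) ℚ_[p])) a b‖
        ≤ ((p:ℝ) ^ E) ^ n := norm_adjugate_le _ hPE hu1bd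
    have hmid := norm_mul_entry_le (Matrix.adjugate (u1 : Matrix (Fin n) (Fin n) ℚ_[p]))
      (diagonal (fun i => (p : ℚ_[p]) ^ (-μ i)))
      (pow_nonneg (le_trans zero_le_one hPE) n) (le_trans zero_le_one hD2) hadj hdiag2
    have hk1inv := (K_inv_mem hk1).1
    have hres := norm_mul_entry_le (Matrix.adjugate (u1 : Matrix (Fin n) (Fin n) ℚ_[p])
        * diagonal (fun i => (p : ℚ_[p]) ^ (-μ i)))
      ((k1⁻¹ : GL (Fin n) ℚ_[p]) : Matrix (Fin n) (Fin n) ℚ_[p])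
      (mul_nonneg (pow_nonneg (le_trans zero_le_one hPE) n) (le_trans zero_le_one hD2))
      zero_le_one hmid hk1inv i j
    calc ‖((Matrix.adjugate (u1 : Matrix (Fin n) (Fin n) ℚ_[p])
          * diagonal (fun i => (p : ℚ_[p]) ^ (-μ i)))
          * ((k1⁻¹ : GL (Fin n) ℚ_[p]) : Matrix (Fin n) (Fin n) ℚ_[p])) i j‖
        ≤ ((p:ℝ) ^ E) ^ n * (p:ℝ) ^ E2 * 1 := hres
      _ = C2 := by rw [mul_one]

end BD


section Red

variable {p : ℕ} [Fact p.Prime] {n : ℕ}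

/-- reduction of a `p`-adic number of norm at most one modulo `p^m` (junk value otherwise). -/
noncomputable def redq (p : ℕ) [Fact p.Prime] (m : ℕ) (x : ℚ_[p]) : ZMod (p ^ m) :=
  if h : ‖x‖ ≤ 1 then PadicInt.toZModPow m (⟨x, h⟩ : ℤ_[p]) else 0

lemma redq_eq {m : ℕ} {x y : ℚ_[p]} (hx : ‖x‖ ≤ 1) (hy : ‖y‖ ≤ 1)
    (h : redq p m x = redq p m y) : ‖x - y‖ ≤ (p:ℝ) ^ (-(m:ℤ)) := by
  rw [redq, dif_pos hx, redq, dif_pos hy] at h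
  set x' : ℤ_[p] := ⟨x, hx⟩ with hx'
  set y' : ℤ_[p] := ⟨y, hy⟩ with hy'
  have hker : PadicInt.toZModPow m (x' - y') = 0 := by rw [map_sub, h, sub_self]
  have hmem : x' - y' ∈ Ideal.span {(p : ℤ_[p]) ^ m} := by
    rw [← PadicInt.ker_toZModPow m]
    exact hker
  have hle := (PadicInt.norm_le_pow_iff_mem_span_pow (x' - y') m).2 hmem
  have hcoe : ((x' - y' : ℤ_[p]) : ℚ_[p]) = x - y := by
    rw [PadicInt.coe_sub]
  rw [PadicInt.norm_def, hcoe] at hle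
  exact hle

lemma cosets_finite (hn : 0 < n) (lam μ : Fin n → ℤ) :
    {C : Set (GL (Fin n) ℚ_[p]) | ∃ g ∈ (Kgp p n * {piPow p n μ} * Uplus p n) ∩
        (Kgp p n * {piPow p n lam} * Uminus p n), C = Kgp p n * {g}}.Finite := by
  obtain ⟨C, hC1, hCbd⟩ := bounded (p := p) hn lam μ
  have hC0 : (0:ℝ) ≤ C := le_trans zero_le_one hC1
  obtain ⟨N, hN⟩ := pow_unbounded_of_one_lt C (one_lt_pR (p := p))
  have hCN : C ≤ (p:ℝ) ^ (N:ℤ) := by rw [zpow_natCast]; exact le_of_lt hN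
  set m := 2 * N with hmdef
  haveI : NeZero (p ^ m) := ⟨pow_ne_zero m (Fact.out : p.Prime).ne_zero⟩
  set S := (Kgp p n * {piPow p n μ} * Uplus p n) ∩ (Kgp p n * {piPow p n lam} * Uminus p n)
    with hSdef
  set f : Set (GL (Fin n) ℚ_[p]) → Set (Matrix (Fin n) (Fin n) (ZMod (p ^ m))) :=
    fun Cs => (fun g : GL (Fin n) ℚ_[p] =>
      (fun i j => redq p m ((p:ℚ_[p]) ^ (N:ℤ) * (g : Matrix (Fin n) (Fin n) ℚ_[p]) i j)
        : Matrix (Fin n) (Fin n) (ZMod (p ^ m)))) '' Cs with hfdef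
  refine Set.Finite.of_finite_image (f := f)
    (Set.Finite.subset Set.finite_univ (Set.subset_univ _)) ?_
  -- integrality of scaled entries
  have hint : ∀ (h : GL (Fin n) ℚ_[p]), (∀ i j, ‖(h : Matrix (Fin n) (Fin n) ℚ_[p]) i j‖ ≤ C) →
      ∀ i j, ‖(p:ℚ_[p]) ^ (N:ℤ) * (h : Matrix (Fin n) (Fin n) ℚ_[p]) i j‖ ≤ 1 := by
    intro h hbd i j
    rw [Padic.padicNormE.mul, Padic.norm_p_zpow]
    calc (p:ℝ) ^ (-(N:ℤ)) * ‖(h : Matrix (Fin n) (Fin n) ℚ_[p]) i j‖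
        ≤ (p:ℝ) ^ (-(N:ℤ)) * (p:ℝ) ^ (N:ℤ) := by
          refine mul_le_mul_of_nonneg_left (le_trans (hbd i j) hCN)
            (le_of_lt (zpow_pos pR_pos _))
      _ = 1 := by rw [← zpow_add₀ (ne_of_gt (pR_pos (p := p))), neg_add_cancel, zpow_zero]
  rintro Cs1 ⟨g1, hg1S, rfl⟩ Cs2 ⟨g2, hg2S, rfl⟩ hf12
  have hmem2 : (fun i j => redq p m ((p:ℚ_[p]) ^ (N:ℤ) * (g2 : Matrix (Fin n) (Fin n) ℚ_[p]) i j)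
      : Matrix (Fin n) (Fin n) (ZMod (p ^ m))) ∈ f (Kgp p n * {g2}) :=
    ⟨g2, self_mem_coset g2, rfl⟩
  rw [← hf12] at hmem2
  obtain ⟨g, hgC, hgeq⟩ := hmem2
  have hgC' := hgC
  rw [Set.mul_singleton] at hgC'
  obtain ⟨k, hkK, hkg0⟩ := hgC'
  have hkg : k * g1 = g := hkg0
  -- bounds
  have hg1bd := (hCbd g1 hg1S).1
  have hg1inv := (hCbd g1 hg1S).2
  have hg2bd := (hCbd g2 hg2S).1
  have hgbd : ∀ i j, ‖(g : Matrix (Fin n) (Fin n) ℚ_[p]) i j‖ ≤ C := by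
    intro i j
    rw [← hkg, Matrix.GeneralLinearGroup.coe_mul]
    have := norm_mul_entry_le (k : Matrix (Fin n) (Fin n) ℚ_[p])
      (g1 : Matrix (Fin n) (Fin n) ℚ_[p]) zero_le_one hC0 hkK.1 hg1bd i j
    calc ‖((k : Matrix (Fin n) (Fin n) ℚ_[p]) * (g1 : Matrix (Fin n) (Fin n) ℚ_[p])) i j‖
        ≤ 1 * C := this
      _ = C := one_mul C
  have hginvbd : ∀ i j, ‖((g⁻¹ : GL (Fin n) ℚ_[p]) : Matrix (Fin n) (Fin n) ℚ_[p]) i j‖ ≤ C := by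
    intro i j
    have hginv : g⁻¹ = g1⁻¹ * k⁻¹ := by rw [← hkg, _root_.mul_inv_rev]
    rw [hginv, Matrix.GeneralLinearGroup.coe_mul]
    have := norm_mul_entry_le ((g1⁻¹ : GL (Fin n) ℚ_[p]) : Matrix (Fin n) (Fin n) ℚ_[p])
      ((k⁻¹ : GL (Fin n) ℚ_[p]) : Matrix (Fin n) (Fin n) ℚ_[p]) hC0 zero_le_one
      hg1inv (K_inv_mem hkK).1 i j
    calc ‖(((g1⁻¹ : GL (Fin n) ℚ_[p]) : Matrix (Fin n) (Fin n) ℚ_[p])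
          * ((k⁻¹ : GL (Fin n) ℚ_[p]) : Matrix (Fin n) (Fin n) ℚ_[p])) i j‖ ≤ C * 1 := this
      _ = C := mul_one C
  -- difference bound
  have hdiff : ∀ i j, ‖(g2 : Matrix (Fin n) (Fin n) ℚ_[p]) i j
      - (g : Matrix (Fin n) (Fin n) ℚ_[p]) i j‖ ≤ (p:ℝ) ^ (-(N:ℤ)) := by
    intro i j
    have h1 := redq_eq (hint g hgbd i j) (hint g2 hg2bd i j)
      (by have h0 := congrFun (congrFun hgeq i) j; simpa using h0)
    rw [← mul_sub, Padic.padicNormE.mul, Padic.norm_p_zpow] at h1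
    have h2 : ‖(g : Matrix (Fin n) (Fin n) ℚ_[p]) i j
        - (g2 : Matrix (Fin n) (Fin n) ℚ_[p]) i j‖ ≤ (p:ℝ) ^ ((N:ℤ) - m) := by
      have h3 : (p:ℝ) ^ ((N:ℤ) - m) = (p:ℝ) ^ (N:ℤ) * (p:ℝ) ^ (-(m:ℤ)) := by
        rw [← zpow_add₀ (ne_of_gt (pR_pos (p := p))), sub_eq_add_neg]
      rw [h3]
      have h4 := mul_le_mul_of_nonneg_left h1 (le_of_lt (zpow_pos (pR_pos (p := p)) (N:ℤ)))
      calc ‖(g : Matrix (Fin n) (Fin n) ℚ_[p]) i j - (g2 : Matrix (Fin n) (Fin n) ℚ_[p]) i j‖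
          = (p:ℝ) ^ (N:ℤ) * ((p:ℝ) ^ (-(N:ℤ))
            * ‖(g : Matrix (Fin n) (Fin n) ℚ_[p]) i j
              - (g2 : Matrix (Fin n) (Fin n) ℚ_[p]) i j‖) := by
            rw [← mul_assoc, ← zpow_add₀ (ne_of_gt (pR_pos (p := p))), add_neg_cancel,
              zpow_zero, one_mul]
        _ ≤ (p:ℝ) ^ (N:ℤ) * (p:ℝ) ^ (-(m:ℤ)) := h4
    have h5 : ((N:ℤ) - m) = -(N:ℤ) := by
      rw [hmdef]
      push_cast
      ring
    rw [← norm_neg, neg_sub]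
    rw [h5] at h2
    exact h2
  -- the quotient element is integral
  have hKmem : g2 * g⁻¹ ∈ Kgp p n := by
    constructor
    · intro i j
      rw [Matrix.GeneralLinearGroup.coe_mul]
      set D : Matrix (Fin n) (Fin n) ℚ_[p] :=
        (g2 : Matrix (Fin n) (Fin n) ℚ_[p]) - (g : Matrix (Fin n) (Fin n) ℚ_[p]) with hD
      have hsplit : (g2 : Matrix (Fin n) (Fin n) ℚ_[p])
          * ((g⁻¹ : GL (Fin n) ℚ_[p]) : Matrix (Fin n) (Fin n) ℚ_[p])
          = D * ((g⁻¹ : GL (Fin n) ℚ_[p]) : Matrix (Fin n) (Fin n) ℚ_[p]) + 1 := by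
        rw [hD, Matrix.sub_mul]
        have : (g : Matrix (Fin n) (Fin n) ℚ_[p])
            * ((g⁻¹ : GL (Fin n) ℚ_[p]) : Matrix (Fin n) (Fin n) ℚ_[p]) = 1 := by
          rw [← Matrix.GeneralLinearGroup.coe_mul, mul_inv_cancel]
          rfl
        rw [this]
        abel
      rw [hsplit]
      have hDinv : ∀ a b, ‖(D * ((g⁻¹ : GL (Fin n) ℚ_[p]) : Matrix (Fin n) (Fin n) ℚ_[p])) a b‖
          ≤ (p:ℝ) ^ (-(N:ℤ)) * C := by
        intro a b
        exact norm_mul_entry_le D _ (le_of_lt (zpow_pos pR_pos _)) hC0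
          (fun a b => hdiff a b) hginvbd a b
      have h6 : (p:ℝ) ^ (-(N:ℤ)) * C ≤ 1 := by
        calc (p:ℝ) ^ (-(N:ℤ)) * C ≤ (p:ℝ) ^ (-(N:ℤ)) * (p:ℝ) ^ (N:ℤ) :=
              mul_le_mul_of_nonneg_left hCN (le_of_lt (zpow_pos pR_pos _))
          _ = 1 := by rw [← zpow_add₀ (ne_of_gt (pR_pos (p := p))), neg_add_cancel, zpow_zero]
      have h7 : ‖(1 : Matrix (Fin n) (Fin n) ℚ_[p]) i j‖ ≤ 1 := by
        rcases eq_or_ne i j with rfl | hij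
        · rw [Matrix.one_apply_eq, norm_one]
        · rw [Matrix.one_apply_ne hij, norm_zero]; exact zero_le_one
      calc ‖(D * ((g⁻¹ : GL (Fin n) ℚ_[p]) : Matrix (Fin n) (Fin n) ℚ_[p])
            + (1 : Matrix (Fin n) (Fin n) ℚ_[p])) i j‖
          ≤ max ‖(D * ((g⁻¹ : GL (Fin n) ℚ_[p]) : Matrix (Fin n) (Fin n) ℚ_[p])) i j‖
            ‖(1 : Matrix (Fin n) (Fin n) ℚ_[p]) i j‖ := by
            have := Padic.nonarchimedean
              ((D * ((g⁻¹ : GL (Fin n) ℚ_[p]) : Matrix (Fin n) (Fin n) ℚ_[p])) i j)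
              ((1 : Matrix (Fin n) (Fin n) ℚ_[p]) i j)
            simpa using this
        _ ≤ 1 := max_le (le_trans (hDinv i j) h6) h7
    · -- determinant has norm one
      obtain ⟨k2', hk2', u2', hu2', hgdec2⟩ := mem_KxU.1 hg2S.1
      obtain ⟨k1', hk1', u1', hu1', hgdec1⟩ := mem_KxU.1 hg1S.1
      have hdet2 : ‖(g2 : Matrix (Fin n) (Fin n) ℚ_[p]).det‖ = (p:ℝ) ^ (-(∑ i, μ i)) :=
        det_norm_muside hk2' hu2' hgdec2
      have hdetg : ‖(g : Matrix (Fin n) (Fin n) ℚ_[p]).det‖ = (p:ℝ) ^ (-(∑ i, μ i)) := by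
        have hgdec : g = (k * k1') * piPow p n μ * u1' := by
          rw [← hkg, hgdec1, ← mul_assoc, ← mul_assoc]
        exact det_norm_muside (K_mul_mem hkK hk1') hu1' hgdec
      rw [Matrix.GeneralLinearGroup.coe_mul, Matrix.det_mul, Padic.padicNormE.mul, hdet2]
      have hcoeinv : ((g⁻¹ : GL (Fin n) ℚ_[p]) : Matrix (Fin n) (Fin n) ℚ_[p])
          = (g : Matrix (Fin n) (Fin n) ℚ_[p])⁻¹ := Matrix.GeneralLinearGroup.coe_inv g
      rw [hcoeinv, Matrix.det_nonsing_inv, Ring.inverse_eq_inv', norm_inv, hdetg]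
      exact mul_inv_cancel₀ (ne_of_gt (zpow_pos pR_pos _))
  -- conclude equality of cosets
  have hg2eq : g2 = (g2 * g⁻¹) * g := by rw [inv_mul_cancel_right]
  calc Kgp p n * {g1} = Kgp p n * {k * g1} := (coset_eq hkK).symm
    _ = Kgp p n * {g} := by rw [hkg]
    _ = Kgp p n * {(g2 * g⁻¹) * g} := (coset_eq hKmem).symm
    _ = Kgp p n * {g2} := by rw [← hg2eq]

end Red


section Dom

variable {p : ℕ} [Fact p.Prime] {n : ℕ}

lemma uminus_det_one {u : GL (Fin n) ℚ_[p]} (hu : u ∈ Uminus p n) :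
    (u : Matrix (Fin n) (Fin n) ℚ_[p]).det = 1 := by
  obtain ⟨hu1, hu0⟩ := hu
  have hbt : ((u : Matrix (Fin n) (Fin n) ℚ_[p])).BlockTriangular OrderDual.toDual := by
    intro i j hij
    exact hu0 i j hij
  rw [Matrix.det_of_lowerTriangular _ hbt]
  simp [hu1]

lemma norm_det_diag (μ : Fin n → ℤ) :
    ‖(diagonal (fun i => (p : ℚ_[p]) ^ (μ i))).det‖ = (p:ℝ) ^ (-(∑ i, μ i)) := by
  rw [Matrix.det_diagonal, norm_prod]
  have : ∀ i ∈ Finset.univ, ‖(p:ℚ_[p]) ^ (μ i)‖ = (p:ℝ) ^ (-μ i) := by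
    intro i _
    exact Padic.norm_p_zpow (μ i)
  rw [Finset.prod_congr rfl this, prod_zpow_eq, ← Finset.sum_neg_distrib]

lemma partial_sums (lam μ : Fin n → ℤ)
    (hne : ((Kgp p n * {piPow p n μ} * Uplus p n) ∩
      (Kgp p n * {piPow p n lam} * Uminus p n)).Nonempty) :
    (∑ i, μ i = ∑ i, lam i) ∧ ∀ c : ℕ,
      ∑ t ∈ Finset.univ.filter (fun t : Fin n => c ≤ t.val), lam t
        ≤ ∑ t ∈ Finset.univ.filter (fun t : Fin n => c ≤ t.val), μ t := by
  obtain ⟨g, hgp, hgm⟩ := hne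
  obtain ⟨k1, hk1, u1, hu1, hg1⟩ := mem_KxU.1 hgp
  obtain ⟨k2, hk2, u2, hu2, hg2⟩ := mem_KxU.1 hgm
  have hkK : k1⁻¹ * k2 ∈ Kgp p n := K_mul_mem (K_inv_mem hk1) hk2
  have heq : piPow p n μ * u1 = (k1⁻¹ * k2) * piPow p n lam * u2 := by
    have h0 : k1 * (piPow p n μ * u1) = k2 * piPow p n lam * u2 := by
      rw [← mul_assoc, ← hg1, hg2]
    calc piPow p n μ * u1 = k1⁻¹ * (k1 * (piPow p n μ * u1)) := by rw [inv_mul_cancel_left]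
      _ = k1⁻¹ * (k2 * piPow p n lam * u2) := by rw [h0]
      _ = (k1⁻¹ * k2) * piPow p n lam * u2 := by rw [mul_assoc, mul_assoc, mul_assoc]
  set k : GL (Fin n) ℚ_[p] := k1⁻¹ * k2 with hkdef
  set A : Matrix (Fin n) (Fin n) ℚ_[p]
    := diagonal (fun i => (p : ℚ_[p]) ^ (μ i)) * (u1 : Matrix (Fin n) (Fin n) ℚ_[p]) with hAdef
  set P2 : Matrix (Fin n) (Fin n) ℚ_[p]
    := diagonal (fun i => (p : ℚ_[p]) ^ (lam i)) * (u2 : Matrix (Fin n) (Fin n) ℚ_[p]) with hP2def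
  have hmat : A = (k : Matrix (Fin n) (Fin n) ℚ_[p]) * P2 := by
    have h1 := congrArg (fun x : GL (Fin n) ℚ_[p] => (x : Matrix (Fin n) (Fin n) ℚ_[p])) heq
    simp only [Matrix.GeneralLinearGroup.coe_mul, piPow_coe] at h1
    rw [hAdef, hP2def, h1, Matrix.mul_assoc]
  constructor
  · -- total sums are equal
    have hdet1 : ‖A.det‖ = (p:ℝ) ^ (-(∑ i, μ i)) := by
      rw [hAdef, Matrix.det_mul, uplus_det_one hu1, mul_one, norm_det_diag]
    have hdet2 : ‖A.det‖ = (p:ℝ) ^ (-(∑ i, lam i)) := by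
      rw [hmat, Matrix.det_mul, hP2def, Matrix.det_mul, uminus_det_one hu2, mul_one,
        Padic.padicNormE.mul, hkK.2, one_mul, norm_det_diag]
    have h3 : (p:ℝ) ^ (-(∑ i, μ i)) = (p:ℝ) ^ (-(∑ i, lam i)) := by rw [← hdet1, hdet2]
    have h4 := zpow_right_injective₀ (pR_pos (p := p)) (ne_of_gt one_lt_pR) h3
    exact neg_injective h4
  · intro c
    have hW : A.toBlock (fun t : Fin n => c ≤ t.val) (fun t : Fin n => c ≤ t.val)
        = ((k : Matrix (Fin n) (Fin n) ℚ_[p])).toBlock (fun t : Fin n => c ≤ t.val)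
            (fun t : Fin n => c ≤ t.val)
          * P2.toBlock (fun t : Fin n => c ≤ t.val) (fun t : Fin n => c ≤ t.val) := by
      ext i j
      rw [Matrix.toBlock_apply, hmat, Matrix.mul_apply, Matrix.mul_apply]
      have hvanish : ∀ l ∈ Finset.univ,
          l ∉ Finset.univ.filter (fun t : Fin n => c ≤ t.val) →
          (k : Matrix (Fin n) (Fin n) ℚ_[p]) (↑i) l * P2 l (↑j) = 0 := by
        intro l _ hl
        have hlP : ¬ (c ≤ l.val) := by simpa using hl
        have hlj : l < (j : Fin n) := by
          have := j.2
          exact Fin.lt_def.2 (by omega)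
        have h8 : P2 l (↑j) = 0 := by
          rw [hP2def, Matrix.diagonal_mul, hu2.2 l (↑j) hlj, mul_zero]
        rw [h8, mul_zero]
      have h1 : ∑ l ∈ Finset.univ.filter (fun t : Fin n => c ≤ t.val),
            (k : Matrix (Fin n) (Fin n) ℚ_[p]) (↑i) l * P2 l (↑j)
          = ∑ l : Fin n, (k : Matrix (Fin n) (Fin n) ℚ_[p]) (↑i) l * P2 l (↑j) :=
        Finset.sum_subset (Finset.subset_univ _) hvanish
      have h2 : ∑ l ∈ Finset.univ.filter (fun t : Fin n => c ≤ t.val),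
            (k : Matrix (Fin n) (Fin n) ℚ_[p]) (↑i) l * P2 l (↑j)
          = ∑ l : {t : Fin n // c ≤ t.val},
              (k : Matrix (Fin n) (Fin n) ℚ_[p]) (↑i) (↑l) * P2 (↑l) (↑j) :=
        Finset.sum_subtype _ (by simp) _
      rw [← h1, h2]
      rfl
    have hbt1 : (A.toBlock (fun t : Fin n => c ≤ t.val)
        (fun t : Fin n => c ≤ t.val)).BlockTriangular id := by
      intro i j hij
      rw [Matrix.toBlock_apply, hAdef, Matrix.diagonal_mul,
        hu1.2 (↑i) (↑j) (by exact hij), mul_zero]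
    have hbt2 : (P2.toBlock (fun t : Fin n => c ≤ t.val)
        (fun t : Fin n => c ≤ t.val)).BlockTriangular OrderDual.toDual := by
      intro i j hij
      rw [Matrix.toBlock_apply, hP2def, Matrix.diagonal_mul,
        hu2.2 (↑i) (↑j) (by exact hij), mul_zero]
    have hdetW1 : ‖(A.toBlock (fun t : Fin n => c ≤ t.val) (fun t : Fin n => c ≤ t.val)).det‖
        = (p:ℝ) ^ (-(∑ l : {t : Fin n // c ≤ t.val}, μ ↑l)) := by
      rw [Matrix.det_of_upperTriangular hbt1]
      have hdiag : ∀ i ∈ (Finset.univ : Finset {t : Fin n // c ≤ t.val}),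
          A.toBlock (fun t : Fin n => c ≤ t.val) (fun t : Fin n => c ≤ t.val) i i
            = (p : ℚ_[p]) ^ (μ (↑i : Fin n)) := by
        intro i _
        rw [Matrix.toBlock_apply, hAdef, Matrix.diagonal_mul, hu1.1, mul_one]
      rw [Finset.prod_congr rfl hdiag, norm_prod]
      have h9 : ∀ i : {t : Fin n // c ≤ t.val}, i ∈ (Finset.univ : Finset _) →
          ‖(p:ℚ_[p]) ^ (μ (↑i : Fin n))‖ = (p:ℝ) ^ (-μ (↑i : Fin n)) :=
        fun i _ => Padic.norm_p_zpow _
      rw [Finset.prod_congr rfl h9, prod_zpow_eq, ← Finset.sum_neg_distrib]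
    have hdetW2 : ‖(P2.toBlock (fun t : Fin n => c ≤ t.val) (fun t : Fin n => c ≤ t.val)).det‖
        = (p:ℝ) ^ (-(∑ l : {t : Fin n // c ≤ t.val}, lam ↑l)) := by
      rw [Matrix.det_of_lowerTriangular _ hbt2]
      have hdiag : ∀ i ∈ (Finset.univ : Finset {t : Fin n // c ≤ t.val}),
          P2.toBlock (fun t : Fin n => c ≤ t.val) (fun t : Fin n => c ≤ t.val) i i
            = (p : ℚ_[p]) ^ (lam (↑i : Fin n)) := by
        intro i _
        rw [Matrix.toBlock_apply, hP2def, Matrix.diagonal_mul, hu2.1, mul_one]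
      rw [Finset.prod_congr rfl hdiag, norm_prod]
      have h9 : ∀ i : {t : Fin n // c ≤ t.val}, i ∈ (Finset.univ : Finset _) →
          ‖(p:ℚ_[p]) ^ (lam (↑i : Fin n))‖ = (p:ℝ) ^ (-lam (↑i : Fin n)) :=
        fun i _ => Padic.norm_p_zpow _
      rw [Finset.prod_congr rfl h9, prod_zpow_eq, ← Finset.sum_neg_distrib]
    have hdetK2 : ‖(((k : Matrix (Fin n) (Fin n) ℚ_[p])).toBlock (fun t : Fin n => c ≤ t.val)
        (fun t : Fin n => c ≤ t.val)).det‖ ≤ 1 := by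
      have := norm_det_le (((k : Matrix (Fin n) (Fin n) ℚ_[p])).toBlock
        (fun t : Fin n => c ≤ t.val) (fun t : Fin n => c ≤ t.val)) zero_le_one (fun i j => by
          rw [Matrix.toBlock_apply]
          exact hkK.1 _ _)
      simpa using this
    have hineq : (p:ℝ) ^ (-(∑ l : {t : Fin n // c ≤ t.val}, μ ↑l))
        ≤ (p:ℝ) ^ (-(∑ l : {t : Fin n // c ≤ t.val}, lam ↑l)) := by
      rw [← hdetW1, ← hdetW2, hW, Matrix.det_mul, Padic.padicNormE.mul]
      calc _ ≤ 1 * ‖(P2.toBlock (fun t : Fin n => c ≤ t.val)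
            (fun t : Fin n => c ≤ t.val)).det‖ :=
            mul_le_mul_of_nonneg_right hdetK2 (norm_nonneg _)
        _ = _ := one_mul _
    rw [zpow_le_zpow_iff_right₀ one_lt_pR, neg_le_neg_iff] at hineq
    calc ∑ t ∈ Finset.univ.filter (fun t : Fin n => c ≤ t.val), lam t
        = ∑ l : {t : Fin n // c ≤ t.val}, lam ↑l := Finset.sum_subtype _ (by simp) _
      _ ≤ ∑ l : {t : Fin n // c ≤ t.val}, μ ↑l := hineq
      _ = ∑ t ∈ Finset.univ.filter (fun t : Fin n => c ≤ t.val), μ t :=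
          (Finset.sum_subtype _ (by simp) _).symm

end Dom


section Dom2

variable {p : ℕ} [Fact p.Prime] {n : ℕ}

lemma dom_of_nonempty (hn : 2 ≤ n) (lam μ : Fin n → ℤ)
    (hne : ((Kgp p n * {piPow p n μ} * Uplus p n) ∩
      (Kgp p n * {piPow p n lam} * Uminus p n)).Nonempty) : domLE n μ lam := by
  obtain ⟨htot, hpart⟩ := partial_sums lam μ hne
  set σ : ℕ → ℤ :=
    fun c => ∑ t ∈ Finset.univ.filter (fun t : Fin n => c ≤ t.val), (μ t - lam t) with hσdef
  have hσsplit : ∀ c, σ c = (∑ t ∈ Finset.univ.filter (fun t : Fin n => c ≤ t.val), μ t)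
      - ∑ t ∈ Finset.univ.filter (fun t : Fin n => c ≤ t.val), lam t := by
    intro c
    simp only [hσdef]
    rw [Finset.sum_sub_distrib]
  have hσ0 : ∀ c, 0 ≤ σ c := by
    intro c
    rw [hσsplit c]
    linarith [hpart c]
  have hσzero : σ 0 = 0 := by
    rw [hσsplit 0]
    have huniv : Finset.univ.filter (fun t : Fin n => 0 ≤ t.val) = Finset.univ := by
      apply Finset.filter_true_of_mem
      intro t _
      exact Nat.zero_le _
    rw [huniv, htot, sub_self]
  have hσn : ∀ c, n ≤ c → σ c = 0 := by
    intro c hc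
    simp only [hσdef]
    have hempty : Finset.univ.filter (fun t : Fin n => c ≤ t.val) = ∅ := by
      apply Finset.filter_false_of_mem
      intro t _
      have := t.isLt
      omega
    rw [hempty, Finset.sum_empty]
  have hstep : ∀ j : Fin n, σ j.val - σ (j.val + 1) = μ j - lam j := by
    intro j
    have hins : Finset.univ.filter (fun t : Fin n => j.val ≤ t.val)
        = insert j (Finset.univ.filter (fun t : Fin n => j.val + 1 ≤ t.val)) := by
      ext t
      simp only [Finset.mem_filter, Finset.mem_univ, true_and, Finset.mem_insert]
      constructor
      · intro h
        rcases eq_or_lt_of_le h with h1 | h1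
        · left
          exact (Fin.ext h1.symm)
        · right
          omega
      · rintro (rfl | h)
        · exact le_refl _
        · omega
    have hnot : j ∉ Finset.univ.filter (fun t : Fin n => j.val + 1 ≤ t.val) := by
      simp
    simp only [hσdef]
    rw [hins, Finset.sum_insert hnot]
    ring
  refine ⟨fun i => (σ (i + 1)).toNat, ?_⟩
  funext j
  rw [Finset.sum_apply]
  have hterm : ∀ i ∈ Finset.range (n - 1),
      ((((σ (i + 1)).toNat : ℕ) : ℤ) * simpleCoroot n i j)
        = (σ (i + 1)) * (if (j : ℕ) = i then 1 else 0)
          - (σ (i + 1)) * (if (j : ℕ) = i + 1 then 1 else 0) := by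
    intro i _
    rw [Int.toNat_of_nonneg (hσ0 _), simpleCoroot, mul_sub]
  rw [Finset.sum_congr rfl hterm, Finset.sum_sub_distrib]
  have hS1 : ∑ i ∈ Finset.range (n - 1), (σ (i + 1)) * (if (j : ℕ) = i then 1 else 0)
      = σ (j.val + 1) := by
    rw [Finset.sum_eq_single j.val]
    · simp
    · intro a _ ha
      rw [if_neg (fun h => ha h.symm), mul_zero]
    · intro hj
      have hj2 : j.val = n - 1 := by
        have := j.isLt
        simp only [Finset.mem_range] at hj
        omega
      have : σ (j.val + 1) = 0 := by
        apply hσn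
        omega
      rw [this, zero_mul]
  have hS2 : ∑ i ∈ Finset.range (n - 1), (σ (i + 1)) * (if (j : ℕ) = i + 1 then 1 else 0)
      = σ j.val := by
    rw [Finset.sum_eq_single (j.val - 1)]
    · rcases Nat.eq_zero_or_pos j.val with h0 | h0
      · rw [h0]
        rw [hσzero]
        rw [if_neg (by omega), mul_zero]
      · rw [if_pos (by omega), mul_one]
        congr 1
        omega
    · intro a _ ha
      rw [if_neg (by omega), mul_zero]
    · intro hj
      exfalso
      have := j.isLt
      simp only [Finset.mem_range] at hj
      omega
  rw [hS1, hS2]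
  have := hstep j
  linarith

end Dom2

end GK


open Pointwise in
/-- **Gindikin–Karpelevich Finiteness** (Theorem 1.3, type `A_{n−1}` instance):
`K\(K·π^{μ}·U⁺ ∩ K·π^{λ}·U⁻)` is finite, and empty unless `μ ≤ λ`. -/
theorem gindikin_karpelevich_finiteness (p : ℕ) [Fact p.Prime] (n : ℕ) (hn : 2 ≤ n)
    (lam μ : Fin n → ℤ) :
    {C : Set (GL (Fin n) ℚ_[p]) |
        ∃ g ∈ (Kgp p n * {piPow p n μ} * Uplus p n) ∩ (Kgp p n * {piPow p n lam} * Uminus p n),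
          C = Kgp p n * {g}}.Finite ∧
      (((Kgp p n * {piPow p n μ} * Uplus p n) ∩
          (Kgp p n * {piPow p n lam} * Uminus p n)).Nonempty → domLE n μ lam) := by
  constructor
  · exact GK.cosets_finite (by omega) lam μ
  · exact fun hne => GK.dom_of_nonempty hn lam μ hne
end

section
/- (Corollary 3.4, consequence of Joseph's Lemma, type A_{n−1} instance.) Let w ∈ S_n, let c_1,…,c_{n−1} be nonnegative integers, and set μ = −Σ_{i=1}^{n−1} c_i(e_i − e_{i+1}) ∈ ℤⁿ. If there exist u⁻ ∈ U⁻, x ∈ U⁺_{w,π} and u ∈ U⁺ with u⁻ = x·w·π^{μ}·u, then ℓ(w) ≤ 2(c_1 + ⋯ + c_{n−1}). -/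
open Matrix Pointwise

/-- `U⁺_{w,π}`: elements `u ∈ U⁺` all of whose entries of `u − 1` lie in `pℤ_p`
and with `w·u·w⁻¹ ∈ U⁻`. -/
def UplusWpi (p : ℕ) [Fact p.Prime] (n : ℕ) (w : Equiv.Perm (Fin n)) :
    Set (GL (Fin n) ℚ_[p]) :=
  {u | u ∈ Uplus p n ∧
    (∀ i j : Fin n, ‖((u : Matrix (Fin n) (Fin n) ℚ_[p]) - 1) i j‖ ≤ (p : ℝ)⁻¹) ∧
    permGL p n w * u * (permGL p n w)⁻¹ ∈ Uminus p n}


/-! ### Auxiliary combinatorial lemmas (Diaconis–Graham type inequality) -/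

open Finset in
private lemma card_filter_lt_fin {n : ℕ} (a : Fin n) :
    (Finset.univ.filter fun t : Fin n => t < a).card = (a : ℕ) := by
  rw [show (Finset.univ.filter fun t : Fin n => t < a) = Finset.Iio a by
    ext t; simp, Fin.card_Iio]

open Finset in
private lemma card_filter_gt_fin {n : ℕ} (a : Fin n) :
    (Finset.univ.filter fun t : Fin n => a < t).card = n - 1 - (a : ℕ) := by
  rw [show (Finset.univ.filter fun t : Fin n => a < t) = Finset.Ioi a by
    ext t; simp, Fin.card_Ioi]

open Finset in
private lemma card_filter_comp_perm {n : ℕ} (v : Equiv.Perm (Fin n)) (P : Fin n → Prop)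
    [DecidablePred P] :
    (Finset.univ.filter fun i : Fin n => P (v i)).card
      = (Finset.univ.filter P).card := by
  apply Finset.card_bij' (fun i _ => v i) (fun t _ => v⁻¹ t) <;> simp

/-- displacement of a permutation -/
private def disp {n : ℕ} (v : Equiv.Perm (Fin n)) : ℕ :=
  ∑ i : Fin n, (((v i : Fin n) : ℕ) - (i : ℕ) + ((i : ℕ) - ((v i : Fin n) : ℕ)))

private lemma permLength_one (n : ℕ) : permLength n 1 = 0 := by
  unfold permLength
  rw [Finset.card_eq_zero, Finset.filter_eq_empty_iff]
  rintro q -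
  simp only [Equiv.Perm.one_apply]
  rintro ⟨h1, h2⟩
  exact absurd h2 (not_lt_of_gt h1)

open Finset in
private lemma permLength_le_disp_aux (N : ℕ) : ∀ {n : ℕ} (v : Equiv.Perm (Fin n)),
    disp v ≤ N → permLength n v ≤ disp v := by
  induction N with
  | zero =>
    intro n v hv
    have h0 : disp v = 0 := Nat.le_zero.mp hv
    have hterm := (Finset.sum_eq_zero_iff).mp h0
    have : v = 1 := by
      ext i
      have := hterm i (Finset.mem_univ i)
      simpa using Nat.le_antisymm (by omega) (by omega)
    rw [this, permLength_one]
    exact Nat.zero_le _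
  | succ N ih =>
    intro n v hv
    by_cases h1 : v = 1
    · rw [h1, permLength_one]; exact Nat.zero_le _
    have hsupp : v.support.Nonempty := by
      rw [Finset.nonempty_iff_ne_empty, ne_eq, Equiv.Perm.support_eq_empty_iff]
      exact h1
    set m : Fin n := v.support.max' hsupp with hm_def
    have hm : m ∈ v.support := v.support.max'_mem hsupp
    have hmax : ∀ i : Fin n, v i ≠ i → i ≤ m := fun i hi =>
      v.support.le_max' i (Equiv.Perm.mem_support.mpr hi)
    have hvm : v m ≠ m := Equiv.Perm.mem_support.mp hm
    have hfix : ∀ i : Fin n, m < i → v i = i := by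
      intro i hi
      by_contra hne
      exact absurd (hmax i hne) (not_le.mpr hi)
    have hvsupp : ∀ i : Fin n, v i ≠ i → v i ≤ m := by
      intro i hi
      apply v.support.le_max'
      rw [Equiv.Perm.apply_mem_support]
      exact Equiv.Perm.mem_support.mpr hi
    have ham : v m < m := lt_of_le_of_ne (hvsupp m hvm) hvm
    set b : Fin n := v⁻¹ m with hb_def
    have hvb : v b = m := by simp [hb_def]
    have hbne : b ≠ m := by
      intro hbm
      rw [hbm] at hvb
      exact hvm hvb
    have hbm : b < m := by
      refine lt_of_le_of_ne ?_ hbne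
      apply hmax
      rw [hvb]; exact fun h => hbne h.symm
    set v' : Equiv.Perm (Fin n) := v * Equiv.swap b m with hv'_def
    have hv'm : v' m = m := by simp [hv'_def, Equiv.swap_apply_right, hvb]
    have hv'b : v' b = v m := by simp [hv'_def, Equiv.swap_apply_left]
    have hv'o : ∀ i : Fin n, i ≠ b → i ≠ m → v' i = v i := by
      intro i hib him
      simp [hv'_def, Equiv.swap_apply_of_ne_of_ne hib him]
    -- numeric abbreviations
    set A : ℕ := ((v m : Fin n) : ℕ) with hA_def
    set B : ℕ := ((b : Fin n) : ℕ) with hB_def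
    set M : ℕ := ((m : Fin n) : ℕ) with hM_def
    have hAM : A < M := ham
    have hBM : B < M := hbm
    have hMn : M < n := m.isLt
    -- displacement relation
    have hdisp : disp v + ((A - B) + (B - A)) = disp v' + ((M - A) + (M - B)) := by
      have key : ∀ u : Equiv.Perm (Fin n), disp u =
          (((u b : Fin n) : ℕ) - B + (B - ((u b : Fin n) : ℕ))
            + (((u m : Fin n) : ℕ) - M + (M - ((u m : Fin n) : ℕ))))
          + ∑ i ∈ Finset.univ.filter (fun i : Fin n => ¬(i = b ∨ i = m)),
              (((u i : Fin n) : ℕ) - (i : ℕ) + ((i : ℕ) - ((u i : Fin n) : ℕ))) := by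
        intro u
        unfold disp
        rw [← Finset.sum_filter_add_sum_filter_not Finset.univ
          (fun i : Fin n => i = b ∨ i = m)]
        congr 1
        rw [show Finset.univ.filter (fun i : Fin n => i = b ∨ i = m) = {b, m} by
          ext t; simp [or_comm], Finset.sum_pair hbne]
      have htail : ∑ i ∈ Finset.univ.filter (fun i : Fin n => ¬(i = b ∨ i = m)),
              (((v i : Fin n) : ℕ) - (i : ℕ) + ((i : ℕ) - ((v i : Fin n) : ℕ)))
          = ∑ i ∈ Finset.univ.filter (fun i : Fin n => ¬(i = b ∨ i = m)),
              (((v' i : Fin n) : ℕ) - (i : ℕ) + ((i : ℕ) - ((v' i : Fin n) : ℕ))) := by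
        apply Finset.sum_congr rfl
        intro i hi
        simp only [Finset.mem_filter] at hi
        push_neg at hi
        rw [hv'o i hi.2.1 hi.2.2]
      rw [key v, key v', htail, hvb, hv'b, hv'm]
      omega
    have hdisplt : disp v' < disp v := by omega
    -- splitting of inversion counts
    have hsplit : ∀ u : Equiv.Perm (Fin n), permLength n u =
        (Finset.univ.filter fun q : Fin n × Fin n =>
          (q.1 < q.2 ∧ u q.2 < u q.1) ∧ (q.1 = b ∨ q.1 = m ∨ q.2 = b ∨ q.2 = m)).card +
        (Finset.univ.filter fun q : Fin n × Fin n =>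
          (q.1 < q.2 ∧ u q.2 < u q.1) ∧ ¬ (q.1 = b ∨ q.1 = m ∨ q.2 = b ∨ q.2 = m)).card := by
      intro u
      have h := Finset.card_filter_add_card_filter_not
        (s := Finset.univ.filter fun q : Fin n × Fin n => q.1 < q.2 ∧ u q.2 < u q.1)
        (p := fun q : Fin n × Fin n => q.1 = b ∨ q.1 = m ∨ q.2 = b ∨ q.2 = m)
      rw [Finset.filter_filter, Finset.filter_filter] at h
      exact h.symm
    have hcommon :
        (Finset.univ.filter fun q : Fin n × Fin n =>
          (q.1 < q.2 ∧ v q.2 < v q.1) ∧ ¬ (q.1 = b ∨ q.1 = m ∨ q.2 = b ∨ q.2 = m))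
        = (Finset.univ.filter fun q : Fin n × Fin n =>
          (q.1 < q.2 ∧ v' q.2 < v' q.1) ∧ ¬ (q.1 = b ∨ q.1 = m ∨ q.2 = b ∨ q.2 = m)) := by
      ext q
      simp only [Finset.mem_filter, Finset.mem_univ, true_and]
      constructor
      · rintro ⟨⟨hlt, hin⟩, hnt⟩
        have hnt' := hnt
        push_neg at hnt'
        rw [hv'o q.1 hnt'.1 hnt'.2.1, hv'o q.2 hnt'.2.2.1 hnt'.2.2.2]
        exact ⟨⟨hlt, hin⟩, hnt⟩
      · rintro ⟨⟨hlt, hin⟩, hnt⟩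
        have hnt' := hnt
        push_neg at hnt'
        rw [hv'o q.1 hnt'.1 hnt'.2.1, hv'o q.2 hnt'.2.2.1 hnt'.2.2.2] at hin
        exact ⟨⟨hlt, hin⟩, hnt⟩
    -- upper bound on touching inversions of v
    set F1 : Finset (Fin n × Fin n) :=
      (Finset.univ.filter fun i : Fin n => i < m ∧ v m < v i).image (fun i => (i, m)) with hF1_def
    set F2 : Finset (Fin n × Fin n) :=
      (Finset.univ.filter fun j : Fin n => b < j ∧ v j < v b).image (fun j => (b, j)) with hF2_def
    have hF1card : F1.card ≤ M - A := by
      rw [hF1_def, Finset.card_image_of_injective _ (by intro a1 a2 h; simpa using h)]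
      -- count: the filter together with {i : m < i} sits inside {i : v m < v i}
      have hsubs : (Finset.univ.filter fun i : Fin n => i < m ∧ v m < v i)
          ∪ (Finset.univ.filter fun i : Fin n => m < i)
          ⊆ (Finset.univ.filter fun i : Fin n => v m < v i) := by
        intro i hi
        simp only [Finset.mem_union, Finset.mem_filter, Finset.mem_univ, true_and] at hi ⊢
        rcases hi with h | h
        · exact h.2
        · rw [hfix i h]
          exact lt_trans ham h
      have hdisj : Disjoint (Finset.univ.filter fun i : Fin n => i < m ∧ v m < v i)
          (Finset.univ.filter fun i : Fin n => m < i) := by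
        rw [Finset.disjoint_left]
        intro i hi1 hi2
        simp only [Finset.mem_filter, Finset.mem_univ, true_and] at hi1 hi2
        exact absurd hi2 (lt_asymm hi1.1)
      have hcards := Finset.card_le_card hsubs
      rw [Finset.card_union_of_disjoint hdisj] at hcards
      rw [card_filter_gt_fin, card_filter_comp_perm v (fun t => v m < t),
        card_filter_gt_fin] at hcards
      omega
    have hF2card : F2.card ≤ M - B := by
      rw [hF2_def, Finset.card_image_of_injective _ (by intro a1 a2 h; simpa using h)]
      have hsubs : (Finset.univ.filter fun j : Fin n => j < b)
          ∪ (Finset.univ.filter fun j : Fin n => b < j ∧ v j < v b)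
          ⊆ (Finset.univ.filter fun j : Fin n => v j < v b) := by
        intro j hj
        simp only [Finset.mem_union, Finset.mem_filter, Finset.mem_univ, true_and] at hj ⊢
        rcases hj with h | h
        · -- j < b implies v j < v b = m
          rw [hvb]
          by_cases hfixj : v j = j
          · rw [hfixj]; exact lt_trans h hbm
          · refine lt_of_le_of_ne (hvsupp j hfixj) ?_
            intro hc
            exact absurd (v.injective (hc.trans hvb.symm)) (ne_of_lt h)
        · exact h.2
      have hdisj : Disjoint (Finset.univ.filter fun j : Fin n => j < b)
          (Finset.univ.filter fun j : Fin n => b < j ∧ v j < v b) := by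
        rw [Finset.disjoint_left]
        intro j hj1 hj2
        simp only [Finset.mem_filter, Finset.mem_univ, true_and] at hj1 hj2
        exact absurd hj2.1 (lt_asymm hj1)
      have hcards := Finset.card_le_card hsubs
      rw [Finset.card_union_of_disjoint hdisj, card_filter_lt_fin,
        card_filter_comp_perm v (fun t => t < v b), card_filter_lt_fin] at hcards
      have hvbM : ((v b : Fin n) : ℕ) = M := by rw [hvb]
      omega
    have hFcover : (Finset.univ.filter fun q : Fin n × Fin n =>
        (q.1 < q.2 ∧ v q.2 < v q.1) ∧ (q.1 = b ∨ q.1 = m ∨ q.2 = b ∨ q.2 = m)) ⊆ F1 ∪ F2 := by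
      intro q hq
      simp only [Finset.mem_filter, Finset.mem_univ, true_and] at hq
      obtain ⟨⟨hlt, hin⟩, ht⟩ := hq
      rcases ht with h | h | h | h
      · -- q.1 = b
        apply Finset.mem_union_right
        rw [hF2_def]
        simp only [Finset.mem_image, Finset.mem_filter, Finset.mem_univ, true_and]
        refine ⟨q.2, ⟨?_, ?_⟩, ?_⟩
        · rw [← h]; exact hlt
        · rw [← h]; exact hin
        · rw [← h]
      · -- q.1 = m : impossible
        exfalso
        have h2 : m < q.2 := by rw [← h]; exact hlt
        have hfx : v q.2 = q.2 := hfix q.2 h2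
        rw [hfx, h] at hin
        have hx1 : (q.2 : ℕ) < A := hin
        have hx2 : M < (q.2 : ℕ) := h2
        omega
      · -- q.2 = b : impossible
        exfalso
        have h1 : q.1 < b := by rw [← h]; exact hlt
        rw [h, hvb] at hin
        by_cases hfixq : v q.1 = q.1
        · rw [hfixq] at hin
          have hx1 : M < (q.1 : ℕ) := hin
          have hx2 : (q.1 : ℕ) < B := h1
          omega
        · have := hvsupp q.1 hfixq
          exact absurd hin (not_lt.mpr this)
      · -- q.2 = m
        apply Finset.mem_union_left
        rw [hF1_def]
        simp only [Finset.mem_image, Finset.mem_filter, Finset.mem_univ, true_and]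
        refine ⟨q.1, ⟨?_, ?_⟩, ?_⟩
        · rw [← h]; exact hlt
        · rw [← h]; exact hin
        · rw [← h]
    have hupper : (Finset.univ.filter fun q : Fin n × Fin n =>
        (q.1 < q.2 ∧ v q.2 < v q.1) ∧ (q.1 = b ∨ q.1 = m ∨ q.2 = b ∨ q.2 = m)).card
          ≤ (M - A) + (M - B) := by
      calc (Finset.univ.filter fun q : Fin n × Fin n =>
            (q.1 < q.2 ∧ v q.2 < v q.1) ∧ (q.1 = b ∨ q.1 = m ∨ q.2 = b ∨ q.2 = m)).card
          ≤ (F1 ∪ F2).card := Finset.card_le_card hFcover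
        _ ≤ F1.card + F2.card := Finset.card_union_le _ _
        _ ≤ (M - A) + (M - B) := Nat.add_le_add hF1card hF2card
    -- lower bound on touching inversions of v'
    set X : ℕ := (Finset.univ.filter fun i : Fin n => i < b ∧ v' b < v' i).card with hX_def
    set Y : ℕ := (Finset.univ.filter fun j : Fin n => b < j ∧ v' j < v' b).card with hY_def
    have hXbd : n - 1 - A ≤ X + (n - 1 - B) := by
      have hsubs : (Finset.univ.filter fun i : Fin n => v' b < v' i)
          ⊆ (Finset.univ.filter fun i : Fin n => i < b ∧ v' b < v' i)
            ∪ (Finset.univ.filter fun i : Fin n => b < i) := by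
        intro i hi
        simp only [Finset.mem_union, Finset.mem_filter, Finset.mem_univ, true_and] at hi ⊢
        rcases lt_trichotomy i b with h | h | h
        · exact Or.inl ⟨h, hi⟩
        · exfalso; rw [h] at hi; exact lt_irrefl _ hi
        · exact Or.inr h
      have hcards := Finset.card_le_card hsubs
      have h1 : (Finset.univ.filter fun i : Fin n => v' b < v' i).card = n - 1 - A := by
        rw [card_filter_comp_perm v' (fun t => v' b < t), card_filter_gt_fin, hv'b]
      rw [h1] at hcards
      calc n - 1 - A ≤ ((Finset.univ.filter fun i : Fin n => i < b ∧ v' b < v' i)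
            ∪ (Finset.univ.filter fun i : Fin n => b < i)).card := hcards
        _ ≤ X + (n - 1 - B) := by
            refine le_trans (Finset.card_union_le _ _) ?_
            rw [card_filter_gt_fin]
    have hYbd : A ≤ Y + B := by
      have hsubs : (Finset.univ.filter fun j : Fin n => v' j < v' b)
          ⊆ (Finset.univ.filter fun j : Fin n => b < j ∧ v' j < v' b)
            ∪ (Finset.univ.filter fun j : Fin n => j < b) := by
        intro j hj
        simp only [Finset.mem_union, Finset.mem_filter, Finset.mem_univ, true_and] at hj ⊢
        rcases lt_trichotomy j b with h | h | h
        · exact Or.inr h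
        · exfalso; rw [h] at hj; exact lt_irrefl _ hj
        · exact Or.inl ⟨h, hj⟩
      have hcards := Finset.card_le_card hsubs
      have h1 : (Finset.univ.filter fun j : Fin n => v' j < v' b).card = A := by
        rw [card_filter_comp_perm v' (fun t => t < v' b), card_filter_lt_fin, hv'b]
      rw [h1] at hcards
      calc A ≤ _ := hcards
        _ ≤ Y + B := by
            refine le_trans (Finset.card_union_le _ _) ?_
            rw [card_filter_lt_fin]
    -- G1 and G2 inside touching inversions of v'
    set G1 : Finset (Fin n × Fin n) :=
      (Finset.univ.filter fun i : Fin n => i < b ∧ v' b < v' i).image (fun i => (i, b)) with hG1_def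
    set G2 : Finset (Fin n × Fin n) :=
      (Finset.univ.filter fun j : Fin n => b < j ∧ v' j < v' b).image (fun j => (b, j)) with hG2_def
    have hG1card : G1.card = X := by
      rw [hG1_def, Finset.card_image_of_injective _ (by intro a1 a2 h; simpa using h)]
    have hG2card : G2.card = Y := by
      rw [hG2_def, Finset.card_image_of_injective _ (by intro a1 a2 h; simpa using h)]
    have hGdisj : Disjoint G1 G2 := by
      rw [Finset.disjoint_left]
      intro q hq1 hq2
      rw [hG1_def] at hq1; rw [hG2_def] at hq2
      simp only [Finset.mem_image, Finset.mem_filter, Finset.mem_univ, true_and] at hq1 hq2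
      obtain ⟨i, hi, hiq⟩ := hq1
      obtain ⟨j, hj, hjq⟩ := hq2
      rw [← hiq] at hjq
      have : b = i := congrArg Prod.fst hjq
      rw [← this] at hi
      exact lt_irrefl b hi.1
    have hGsub : G1 ∪ G2 ⊆ (Finset.univ.filter fun q : Fin n × Fin n =>
        (q.1 < q.2 ∧ v' q.2 < v' q.1) ∧ (q.1 = b ∨ q.1 = m ∨ q.2 = b ∨ q.2 = m)) := by
      intro q hq
      rcases Finset.mem_union.mp hq with h | h
      · rw [hG1_def] at h
        simp only [Finset.mem_image, Finset.mem_filter, Finset.mem_univ, true_and] at h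
        obtain ⟨i, hi, hiq⟩ := h
        rw [← hiq]
        simp only [Finset.mem_filter, Finset.mem_univ, true_and]
        exact ⟨⟨hi.1, hi.2⟩, by simp⟩
      · rw [hG2_def] at h
        simp only [Finset.mem_image, Finset.mem_filter, Finset.mem_univ, true_and] at h
        obtain ⟨j, hj, hjq⟩ := h
        rw [← hjq]
        simp only [Finset.mem_filter, Finset.mem_univ, true_and]
        exact ⟨⟨hj.1, hj.2⟩, by simp⟩
    have hlower : X + Y ≤ (Finset.univ.filter fun q : Fin n × Fin n =>
        (q.1 < q.2 ∧ v' q.2 < v' q.1) ∧ (q.1 = b ∨ q.1 = m ∨ q.2 = b ∨ q.2 = m)).card := by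
      calc X + Y = G1.card + G2.card := by rw [hG1card, hG2card]
        _ = (G1 ∪ G2).card := (Finset.card_union_of_disjoint hGdisj).symm
        _ ≤ _ := Finset.card_le_card hGsub
    -- induction hypothesis
    have hIH : permLength n v' ≤ disp v' := ih v' (by omega)
    -- final arithmetic
    have e1 := hsplit v
    have e2 := hsplit v'
    rw [hcommon] at e1
    have hAn : A < n := (v m).isLt
    have hBn : B < n := b.isLt
    omega

private lemma permLength_le_disp {n : ℕ} (v : Equiv.Perm (Fin n)) :
    permLength n v ≤ disp v :=
  permLength_le_disp_aux (disp v) v le_rfl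

private lemma permLength_inv {n : ℕ} (w : Equiv.Perm (Fin n)) :
    permLength n w = permLength n w⁻¹ := by
  unfold permLength
  apply Finset.card_bij' (fun q _ => ((w q.2 : Fin n), (w q.1 : Fin n)))
    (fun q _ => ((w⁻¹ q.2 : Fin n), (w⁻¹ q.1 : Fin n)))
  · intro q hq
    simp only [Finset.mem_filter, Finset.mem_univ, true_and] at hq ⊢
    simpa using ⟨hq.2, hq.1⟩
  · intro q hq
    simp only [Finset.mem_filter, Finset.mem_univ, true_and] at hq ⊢
    simpa using ⟨hq.2, hq.1⟩
  · intro q hq; simp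
  · intro q hq; simp

open Finset in
private lemma disp_eq_twice_sum {n : ℕ} (v : Equiv.Perm (Fin n)) :
    disp v = 2 * ∑ k ∈ Finset.range (n - 1),
      (Finset.univ.filter fun i : Fin n =>
        (i : ℕ) < k + 1 ∧ k + 1 ≤ ((v i : Fin n) : ℕ)).card := by
  have hsum : ∑ k ∈ Finset.range (n - 1),
      (Finset.univ.filter fun i : Fin n =>
        (i : ℕ) < k + 1 ∧ k + 1 ≤ ((v i : Fin n) : ℕ)).card
      = ∑ i : Fin n, (((v i : Fin n) : ℕ) - (i : ℕ)) := by
    have step : ∀ k ∈ Finset.range (n - 1),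
        (Finset.univ.filter fun i : Fin n =>
          (i : ℕ) < k + 1 ∧ k + 1 ≤ ((v i : Fin n) : ℕ)).card
        = ∑ i : Fin n, (if (i : ℕ) < k + 1 ∧ k + 1 ≤ ((v i : Fin n) : ℕ) then 1 else 0) := by
      intro k _
      rw [Finset.card_filter]
    rw [Finset.sum_congr rfl step, Finset.sum_comm]
    apply Finset.sum_congr rfl
    intro i _
    have hvi : ((v i : Fin n) : ℕ) < n := (v i).isLt
    have hii : (i : ℕ) < n := i.isLt
    rw [← Finset.card_filter]
    rw [show (Finset.range (n - 1)).filter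
        (fun k => (i : ℕ) < k + 1 ∧ k + 1 ≤ ((v i : Fin n) : ℕ))
        = Finset.Ico (i : ℕ) ((v i : Fin n) : ℕ) by
      ext t; simp only [Finset.mem_filter, Finset.mem_range, Finset.mem_Ico]; omega]
    rw [Nat.card_Ico]
  have hswap : ∑ i : Fin n, (((v i : Fin n) : ℕ) - (i : ℕ))
      = ∑ i : Fin n, ((i : ℕ) - ((v i : Fin n) : ℕ)) := by
    have h1 : ∑ i : Fin n, (((v i : Fin n) : ℕ) - (i : ℕ))
        + ∑ i : Fin n, min ((v i : Fin n) : ℕ) (i : ℕ)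
        = ∑ i : Fin n, ((v i : Fin n) : ℕ) := by
      rw [← Finset.sum_add_distrib]
      apply Finset.sum_congr rfl
      intro i _
      omega
    have h2 : ∑ i : Fin n, ((i : ℕ) - ((v i : Fin n) : ℕ))
        + ∑ i : Fin n, min ((v i : Fin n) : ℕ) (i : ℕ)
        = ∑ i : Fin n, (i : ℕ) := by
      rw [← Finset.sum_add_distrib]
      apply Finset.sum_congr rfl
      intro i _
      omega
    have h3 : ∑ i : Fin n, ((v i : Fin n) : ℕ) = ∑ i : Fin n, (i : ℕ) :=
      Equiv.sum_comp v (fun t : Fin n => (t : ℕ))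
    omega
  unfold disp
  rw [Finset.sum_add_distrib, hsum, ← hswap]
  ring


/-! ### Auxiliary linear-algebra lemmas over `ℚ_[p]` -/

private lemma submatrix_mul_triu {R : Type*} [CommRing R] {n K : ℕ} (hK : K ≤ n)
    (Y Z : Matrix (Fin n) (Fin n) R) (hZ : ∀ i j : Fin n, j < i → Z i j = 0) :
    (Y * Z).submatrix (Fin.castLE hK) (Fin.castLE hK)
      = (Y.submatrix (Fin.castLE hK) (Fin.castLE hK)) *
        (Z.submatrix (Fin.castLE hK) (Fin.castLE hK)) := by
  ext i j
  simp only [Matrix.submatrix_apply, Matrix.mul_apply]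
  symm
  calc (∑ l : Fin K, Y (Fin.castLE hK i) (Fin.castLE hK l) * Z (Fin.castLE hK l) (Fin.castLE hK j))
      = ∑ l ∈ Finset.univ.map (Fin.castLEEmb hK),
          Y (Fin.castLE hK i) l * Z l (Fin.castLE hK j) := by
        rw [Finset.sum_map]
        simp [Fin.castLEEmb]
    _ = ∑ l : Fin n, Y (Fin.castLE hK i) l * Z l (Fin.castLE hK j) := by
        apply Finset.sum_subset (Finset.subset_univ _)
        intro l _ hl
        have hlK : K ≤ (l : ℕ) := by
          by_contra hc
          push_neg at hc
          apply hl
          simp only [Finset.mem_map, Finset.mem_univ, true_and]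
          exact ⟨⟨(l : ℕ), hc⟩, by ext; simp [Fin.castLEEmb]⟩
        have hj := j.isLt
        have hlt : Fin.castLE hK j < l := by
          rw [Fin.lt_def, Fin.coe_castLE]
          omega
        rw [hZ l (Fin.castLE hK j) hlt, mul_zero]

private lemma det_submatrix_unipotent_upper {R : Type*} [CommRing R] {n K : ℕ} (hK : K ≤ n)
    (Mx : Matrix (Fin n) (Fin n) R) (hdiag : ∀ i, Mx i i = 1)
    (hup : ∀ i j : Fin n, j < i → Mx i j = 0) :
    (Mx.submatrix (Fin.castLE hK) (Fin.castLE hK)).det = 1 := by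
  rw [Matrix.det_of_upperTriangular]
  · exact Finset.prod_eq_one fun i _ => hdiag _
  · intro i j hij
    refine hup _ _ ?_
    rw [Fin.lt_def, Fin.coe_castLE, Fin.coe_castLE]
    exact hij

private lemma det_submatrix_unipotent_lower {R : Type*} [CommRing R] {n K : ℕ} (hK : K ≤ n)
    (Mx : Matrix (Fin n) (Fin n) R) (hdiag : ∀ i, Mx i i = 1)
    (hlow : ∀ i j : Fin n, i < j → Mx i j = 0) :
    (Mx.submatrix (Fin.castLE hK) (Fin.castLE hK)).det = 1 := by
  rw [Matrix.det_of_lowerTriangular]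
  · exact Finset.prod_eq_one fun i _ => hdiag _
  · intro i j hij
    refine hlow _ _ ?_
    rw [Fin.lt_def, Fin.coe_castLE, Fin.coe_castLE]
    exact hij

private lemma prod_zpow_p {p : ℕ} [Fact p.Prime] {ι : Type*} [DecidableEq ι] (s : Finset ι)
    (f : ι → ℤ) :
    ∏ i ∈ s, ((p : ℚ_[p]) ^ (f i)) = (p : ℚ_[p]) ^ (∑ i ∈ s, f i) := by
  have hp0 : (p : ℚ_[p]) ≠ 0 := Nat.cast_ne_zero.mpr (Fact.out : p.Prime).ne_zero
  induction s using Finset.induction_on with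
  | empty => simp
  | insert _ _ h ih => rw [Finset.prod_insert h, Finset.sum_insert h, ih, zpow_add₀ hp0]

private lemma sum_fin_indicator {K : ℕ} (t : ℕ) :
    ∑ j : Fin K, (if (j : ℕ) = t then (1 : ℤ) else 0) = if t < K then 1 else 0 := by
  rw [Fin.sum_univ_eq_sum_range (fun j => if j = t then (1 : ℤ) else 0) K,
    Finset.sum_ite_eq' (Finset.range K) t (fun _ => (1 : ℤ))]
  simp [Finset.mem_range]

open Finset in
private lemma key_card_bound {p : ℕ} [Fact p.Prime] {n : ℕ}
    (w : Equiv.Perm (Fin n)) (c : ℕ → ℕ) (μ : Fin n → ℤ)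
    (hμ : μ = fun j => -∑ i ∈ Finset.range (n - 1), (c i : ℤ) * simpleCoroot n i j)
    {um x u : GL (Fin n) ℚ_[p]}
    (hum : um ∈ Uminus p n) (hx : x ∈ Uplus p n)
    (hxp : ∀ i j : Fin n, ‖((x : Matrix (Fin n) (Fin n) ℚ_[p]) - 1) i j‖ ≤ (p : ℝ)⁻¹)
    (hu : u ∈ Uplus p n)
    (heq : um = x * permGL p n w * piPow p n μ * u)
    {k : ℕ} (hk : k < n - 1) :
    (Finset.univ.filter fun i : Fin n =>
      (i : ℕ) < k + 1 ∧ k + 1 ≤ ((w⁻¹ i : Fin n) : ℕ)).card ≤ c k := by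
  have hp : p.Prime := Fact.out
  have hp1R : (1 : ℝ) < p := by exact_mod_cast hp.one_lt
  have hp0 : (p : ℚ_[p]) ≠ 0 := Nat.cast_ne_zero.mpr hp.ne_zero
  set K := k + 1 with hK_def
  have hKn : K ≤ n := by omega
  set X : Matrix (Fin n) (Fin n) ℚ_[p] := (x : Matrix (Fin n) (Fin n) ℚ_[p]) with hX_def
  -- the matrix identity
  have hPW : (x : Matrix (Fin n) (Fin n) ℚ_[p]) * (permGL p n w : Matrix (Fin n) (Fin n) ℚ_[p])
      = X.submatrix id ⇑w := by
    have h1 : (permGL p n w : Matrix (Fin n) (Fin n) ℚ_[p]) = (w⁻¹).toPEquiv.toMatrix := rfl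
    rw [h1, PEquiv.mul_toMatrix_toPEquiv,
      show Equiv.symm w⁻¹ = w from Equiv.symm_symm w]
  have hPiv : (piPow p n μ : Matrix (Fin n) (Fin n) ℚ_[p])
      = Matrix.diagonal (fun i => (p : ℚ_[p]) ^ (μ i)) := rfl
  have hmat : (um : Matrix (Fin n) (Fin n) ℚ_[p])
      = (X.submatrix id ⇑w * Matrix.diagonal fun i => (p : ℚ_[p]) ^ (μ i))
        * (u : Matrix (Fin n) (Fin n) ℚ_[p]) := by
    have h0 := congrArg Units.val heq
    simp only [Units.val_mul] at h0
    rw [h0, hPW, hPiv]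
  -- determinants of leading K×K blocks
  have hdet_um : (((um : Matrix (Fin n) (Fin n) ℚ_[p])).submatrix
      (Fin.castLE hKn) (Fin.castLE hKn)).det = 1 :=
    det_submatrix_unipotent_lower hKn _ hum.1 hum.2
  have hdet_u : (((u : Matrix (Fin n) (Fin n) ℚ_[p])).submatrix
      (Fin.castLE hKn) (Fin.castLE hKn)).det = 1 :=
    det_submatrix_unipotent_upper hKn _ hu.1 hu.2
  have hsplit := congrArg
    (fun Mx : Matrix (Fin n) (Fin n) ℚ_[p] =>
      (Mx.submatrix (Fin.castLE hKn) (Fin.castLE hKn)).det) hmat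
  rw [submatrix_mul_triu hKn _ _ hu.2, Matrix.det_mul, hdet_u, mul_one, hdet_um] at hsplit
  -- hsplit : 1 = det ((X.submatrix id w * diagonal _).submatrix _ _)
  set N : Matrix (Fin K) (Fin K) ℚ_[p] :=
    X.submatrix (fun i : Fin K => Fin.castLE hKn i) (fun j : Fin K => w (Fin.castLE hKn j))
    with hN_def
  have hY : ((X.submatrix id ⇑w * Matrix.diagonal fun i => (p : ℚ_[p]) ^ (μ i)).submatrix
        (Fin.castLE hKn) (Fin.castLE hKn))
      = N * Matrix.diagonal (fun j : Fin K => (p : ℚ_[p]) ^ (μ (Fin.castLE hKn j))) := by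
    ext i j
    simp [Matrix.mul_diagonal, Matrix.submatrix_apply, hN_def]
  rw [hY, Matrix.det_mul, Matrix.det_diagonal] at hsplit
  -- value of the exponent sum
  have hprod : ∏ j : Fin K, ((p : ℚ_[p]) ^ (μ (Fin.castLE hKn j)))
      = (p : ℚ_[p]) ^ (∑ j : Fin K, μ (Fin.castLE hKn j)) :=
    prod_zpow_p _ _
  have hinner : ∀ i ∈ Finset.range (n - 1),
      (∑ j : Fin K, (c i : ℤ) * simpleCoroot n i (Fin.castLE hKn j))
        = (if i = k then (c i : ℤ) else 0) := by
    intro i _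
    rw [← Finset.mul_sum]
    have h2 : ∑ j : Fin K, simpleCoroot n i (Fin.castLE hKn j)
        = (if i < K then (1 : ℤ) else 0) - (if i + 1 < K then (1 : ℤ) else 0) := by
      simp only [simpleCoroot, Fin.coe_castLE]
      rw [Finset.sum_sub_distrib, sum_fin_indicator i, sum_fin_indicator (i + 1)]
    rw [h2]
    split_ifs <;> omega
  have hmval : (∑ j : Fin K, μ (Fin.castLE hKn j)) = -(c k : ℤ) := by
    rw [hμ]
    simp only
    rw [Finset.sum_neg_distrib, Finset.sum_comm]
    congr 1
    rw [Finset.sum_congr rfl hinner, Finset.sum_ite_eq' (Finset.range (n - 1)) k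
      (fun i => (c i : ℤ))]
    simp [Finset.mem_range, hk]
  -- the determinant of N
  have hdetN : N.det = (p : ℚ_[p]) ^ ((c k : ℤ)) := by
    have h1 : N.det * (p : ℚ_[p]) ^ (-(c k : ℤ)) = 1 := by
      rw [← hmval, ← hprod]; exact hsplit.symm
    calc N.det = N.det * ((p : ℚ_[p]) ^ (-(c k : ℤ)) * (p : ℚ_[p]) ^ ((c k : ℤ))) := by
          rw [← zpow_add₀ hp0]; simp
      _ = (N.det * (p : ℚ_[p]) ^ (-(c k : ℤ))) * (p : ℚ_[p]) ^ ((c k : ℤ)) := by ring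
      _ = (p : ℚ_[p]) ^ ((c k : ℤ)) := by rw [h1, one_mul]
  have hnorm : ‖N.det‖ = (p : ℝ) ^ (-(c k : ℤ)) := by
    rw [hdetN, Padic.norm_p_zpow]
  -- entry bounds
  have hpinv1 : ((p : ℝ))⁻¹ ≤ 1 := by
    rw [inv_le_one_iff₀]
    right
    exact le_of_lt hp1R
  have hXnorm1 : ∀ i j : Fin n, ‖X i j‖ ≤ 1 := by
    intro i j
    by_cases hij : i = j
    · have h1 : X i j = 1 := by rw [hij]; exact hx.1 j
      rw [h1]; simp
    · have h2 : X i j = (X - 1) i j := by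
        simp [Matrix.sub_apply, Matrix.one_apply_ne hij]
      rw [h2]
      exact le_trans (hxp i j) hpinv1
  have hXbad : ∀ (r j : Fin K), K ≤ ((w⁻¹ (Fin.castLE hKn r) : Fin n) : ℕ) →
      ‖N r j‖ ≤ (p : ℝ)⁻¹ := by
    intro r j hbad
    have hne : Fin.castLE hKn r ≠ w (Fin.castLE hKn j) := by
      intro hcon
      have h3 : w⁻¹ (Fin.castLE hKn r) = Fin.castLE hKn j := by rw [hcon]; simp
      rw [h3] at hbad
      have h4 := j.isLt
      rw [Fin.coe_castLE] at hbad
      omega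
    have h2 : N r j = (X - 1) (Fin.castLE hKn r) (w (Fin.castLE hKn j)) := by
      simp [hN_def, Matrix.submatrix_apply, Matrix.sub_apply, Matrix.one_apply_ne hne]
    rw [h2]
    exact hxp _ _
  -- ultrametric bound on the determinant
  set D : ℕ := (Finset.univ.filter fun r : Fin K =>
    K ≤ ((w⁻¹ (Fin.castLE hKn r) : Fin n) : ℕ)).card with hD_def
  have hbound : ‖N.det‖ ≤ (p : ℝ) ^ (-(D : ℤ)) := by
    rw [Matrix.det_apply]
    apply IsUltrametricDist.norm_sum_le_of_forall_le_of_nonneg (by positivity)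
    intro σ _
    have hsmul : ‖Equiv.Perm.sign σ • ∏ i : Fin K, N (σ i) i‖
        = ‖∏ i : Fin K, N (σ i) i‖ := by
      rcases Int.units_eq_one_or (Equiv.Perm.sign σ) with h | h <;> rw [h] <;> simp
    rw [hsmul, norm_prod]
    have hre : (∏ i : Fin K, ‖N (σ i) i‖) = ∏ r : Fin K, ‖N r (σ⁻¹ r)‖ := by
      rw [← Equiv.prod_comp σ (fun r => ‖N r (σ⁻¹ r)‖)]
      apply Finset.prod_congr rfl
      intro i _
      simp
    rw [hre]
    calc (∏ r : Fin K, ‖N r (σ⁻¹ r)‖)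
        ≤ ∏ r : Fin K, (if K ≤ ((w⁻¹ (Fin.castLE hKn r) : Fin n) : ℕ)
            then (p : ℝ)⁻¹ else 1) := by
          apply Finset.prod_le_prod
          · intro r _; exact norm_nonneg _
          · intro r _
            by_cases hbad : K ≤ ((w⁻¹ (Fin.castLE hKn r) : Fin n) : ℕ)
            · rw [if_pos hbad]; exact hXbad r _ hbad
            · rw [if_neg hbad]; exact hXnorm1 _ _
      _ = (p : ℝ)⁻¹ ^ D := by
          rw [Finset.prod_ite, Finset.prod_const, Finset.prod_const_one, mul_one]
      _ = (p : ℝ) ^ (-(D : ℤ)) := by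
          rw [inv_pow, ← zpow_natCast, ← _root_.zpow_neg]
  -- conclude D ≤ c k
  have hDc : D ≤ c k := by
    rw [hnorm] at hbound
    rw [zpow_le_zpow_iff_right₀ hp1R] at hbound
    omega
  -- identify the two cardinalities
  have hcard : (Finset.univ.filter fun i : Fin n =>
      (i : ℕ) < K ∧ K ≤ ((w⁻¹ i : Fin n) : ℕ))
      = (Finset.univ.filter fun r : Fin K =>
          K ≤ ((w⁻¹ (Fin.castLE hKn r) : Fin n) : ℕ)).map (Fin.castLEEmb hKn) := by
    ext i
    simp only [Finset.mem_filter, Finset.mem_univ, true_and, Finset.mem_map]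
    constructor
    · rintro ⟨h1, h2⟩
      exact ⟨⟨(i : ℕ), h1⟩, h2, rfl⟩
    · rintro ⟨r, hr, rfl⟩
      exact ⟨r.isLt, hr⟩
  rw [hcard, Finset.card_map]
  exact hDc

/-- **Corollary 3.4** (consequence of Joseph's Lemma, type `A_{n−1}` instance):
if `μ = −Σ c_i(e_i − e_{i+1})` with `c_i ≥ 0` and `U⁻ ∩ U⁺_{w,π}·w·π^{μ}·U⁺ ≠ ∅`,
then `ℓ(w) ≤ 2⟨ρ, −μ⟩ = 2(c_1 + ⋯ + c_{n−1})`. -/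
theorem joseph_corollary (p : ℕ) [Fact p.Prime] (n : ℕ) (hn : 2 ≤ n)
    (w : Equiv.Perm (Fin n)) (c : ℕ → ℕ) (μ : Fin n → ℤ)
    (hμ : μ = fun j => -∑ i ∈ Finset.range (n - 1), (c i : ℤ) * simpleCoroot n i j)
    (h : ∃ um ∈ Uminus p n, ∃ x ∈ UplusWpi p n w, ∃ u ∈ Uplus p n,
      um = x * permGL p n w * piPow p n μ * u) :
    permLength n w ≤ 2 * ∑ i ∈ Finset.range (n - 1), c i := by
  obtain ⟨um, hum, x, hx, u, hu, heq⟩ := h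
  obtain ⟨hx1, hx2, -⟩ := hx
  calc permLength n w = permLength n w⁻¹ := permLength_inv w
    _ ≤ disp w⁻¹ := permLength_le_disp w⁻¹
    _ = 2 * ∑ k ∈ Finset.range (n - 1),
        (Finset.univ.filter fun i : Fin n =>
          (i : ℕ) < k + 1 ∧ k + 1 ≤ ((w⁻¹ i : Fin n) : ℕ)).card := disp_eq_twice_sum w⁻¹
    _ ≤ 2 * ∑ i ∈ Finset.range (n - 1), c i := by
        apply Nat.mul_le_mul_left
        apply Finset.sum_le_sum
        intro k hk
        exact key_card_bound w c μ hμ hum hx1 hx2 hu heq (Finset.mem_range.mp hk)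
end

section
/- (Iwahori Approximation, Proposition 4.2, type A_{n−1} instance.) Fix w ∈ S_n and μ ∈ ℤⁿ. There exists N ∈ ℕ such that for every λ = (λ_1,…,λ_n) ∈ ℤⁿ with λ_i − λ_{i+1} ≥ N for all 1 ≤ i ≤ n−1, one has the equality of subsets of G: I⁻·π^{λ}·U⁻ ∩ I⁻·w·π^{λ−μ}·U⁺ = I⁻·π^{λ}·U⁻_O ∩ I⁻·w·π^{λ−μ}·U⁺, where U⁻_O = U⁻ ∩ K. -/
open Matrix Pointwise

/-- The opposite Iwahori subgroup `I⁻ = {g ∈ K : g mod p is lower triangular}`. -/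
def Iminus (p : ℕ) [Fact p.Prime] (n : ℕ) : Set (GL (Fin n) ℚ_[p]) :=
  {g | g ∈ Kgp p n ∧
    ∀ i j : Fin n, i < j → ‖(g : Matrix (Fin n) (Fin n) ℚ_[p]) i j‖ ≤ (p : ℝ)⁻¹}


section IwahoriAux

variable {p : ℕ} [Fact p.Prime] {n : ℕ}

private lemma iw_norm_units_zsmul (c : ℤˣ) (x : ℚ_[p]) : ‖c • x‖ = ‖x‖ := by
  rcases Int.units_eq_one_or c with h | h <;> subst h <;>
    simp [Units.smul_def, norm_neg]

private lemma iw_norm_det_le {m : Type*} [Fintype m] [DecidableEq m]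
    (A : Matrix m m ℚ_[p]) (f g : m → ℝ) (hf : ∀ a, 0 ≤ f a) (hg : ∀ b, 0 ≤ g b)
    (h : ∀ a b, ‖A a b‖ ≤ f a * g b) :
    ‖A.det‖ ≤ (∏ a, f a) * (∏ b, g b) := by
  rw [Matrix.det_apply]
  refine IsUltrametricDist.norm_sum_le_of_forall_le_of_nonneg ?_ ?_
  · exact mul_nonneg (Finset.prod_nonneg fun a _ => hf a)
      (Finset.prod_nonneg fun b _ => hg b)
  · intro σ _
    rw [iw_norm_units_zsmul]
    calc ‖∏ i, A (σ i) i‖ = ∏ i, ‖A (σ i) i‖ := norm_prod _ _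
      _ ≤ ∏ i, (f (σ i) * g i) :=
          Finset.prod_le_prod (fun i _ => norm_nonneg _) (fun i _ => h _ _)
      _ = (∏ i, f (σ i)) * ∏ i, g i := Finset.prod_mul_distrib
      _ = _ := by rw [Equiv.prod_comp σ f]

private lemma iw_norm_det_le_one {m : Type*} [Fintype m] [DecidableEq m]
    (A : Matrix m m ℚ_[p]) (h : ∀ i j, ‖A i j‖ ≤ 1) : ‖A.det‖ ≤ 1 := by
  have := iw_norm_det_le A (fun _ => 1) (fun _ => 1) (fun _ => zero_le_one)
    (fun _ => zero_le_one) (by simpa using h)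
  simpa using this



private lemma iw_prod_zpow_sum {ι : Type*} {a : ℝ} (ha : a ≠ 0) (s : Finset ι) (e : ι → ℤ) :
    ∏ t ∈ s, a ^ (e t) = a ^ (∑ t ∈ s, e t) := by
  classical
  induction s using Finset.induction with
  | empty => simp
  | insert _ _ h ih => rw [Finset.prod_insert h, Finset.sum_insert h, ih, zpow_add₀ ha]

private lemma iw_Kgp_mul {p : ℕ} [Fact p.Prime] {n : ℕ} {a b : GL (Fin n) ℚ_[p]}
    (ha : a ∈ Kgp p n) (hb : b ∈ Kgp p n) : a * b ∈ Kgp p n := by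
  constructor
  · intro i j
    have h : ((a * b : GL (Fin n) ℚ_[p]) : Matrix (Fin n) (Fin n) ℚ_[p]) i j
        = ∑ k, ((a : Matrix (Fin n) (Fin n) ℚ_[p]) i k) *
            ((b : Matrix (Fin n) (Fin n) ℚ_[p]) k j) := by
      rw [Units.val_mul, Matrix.mul_apply]
    rw [h]
    refine IsUltrametricDist.norm_sum_le_of_forall_le_of_nonneg zero_le_one ?_
    intro k _
    rw [norm_mul]
    exact mul_le_one₀ (ha.1 i k) (norm_nonneg _) (hb.1 k j)
  · rw [Units.val_mul, Matrix.det_mul, norm_mul, ha.2, hb.2, mul_one]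

private lemma iw_Kgp_inv {p : ℕ} [Fact p.Prime] {n : ℕ} {a : GL (Fin n) ℚ_[p]}
    (ha : a ∈ Kgp p n) : a⁻¹ ∈ Kgp p n := by
  have hcoe : ((a⁻¹ : GL (Fin n) ℚ_[p]) : Matrix (Fin n) (Fin n) ℚ_[p])
      = ((a : Matrix (Fin n) (Fin n) ℚ_[p]))⁻¹ := Matrix.coe_units_inv a
  have hdn : ‖((a : Matrix (Fin n) (Fin n) ℚ_[p]))⁻¹.det‖ = 1 := by
    rw [Matrix.det_nonsing_inv, Ring.inverse_eq_inv', norm_inv, ha.2, inv_one]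
  constructor
  · intro i j
    rw [hcoe, Matrix.inv_def, Matrix.smul_apply, smul_eq_mul, norm_mul,
      Ring.inverse_eq_inv']
    have h1 : ‖((a : Matrix (Fin n) (Fin n) ℚ_[p]).det)⁻¹‖ = 1 := by
      rw [norm_inv, ha.2, inv_one]
    rw [h1, one_mul, Matrix.adjugate_apply]
    apply iw_norm_det_le_one
    intro s t
    rw [Matrix.updateRow_apply]
    split
    · rcases eq_or_ne t i with rfl | h
      · simp
      · simp [Pi.single_apply, h]
    · exact ha.1 _ _
  · rw [hcoe]; exact hdn

private lemma iw_Uplus_inv {p : ℕ} [Fact p.Prime] {n : ℕ} {v : GL (Fin n) ℚ_[p]}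
    (hv : v ∈ Uplus p n) : v⁻¹ ∈ Uplus p n := by
  set V : Matrix (Fin n) (Fin n) ℚ_[p] := ↑v with hVdef
  haveI : Invertible V := v.invertible
  have hbt : V.BlockTriangular id := fun i j h => hv.2 i j h
  have hbti : (V⁻¹).BlockTriangular id := Matrix.blockTriangular_inv_of_blockTriangular hbt
  have hcoe : ((v⁻¹ : GL (Fin n) ℚ_[p]) : Matrix (Fin n) (Fin n) ℚ_[p]) = V⁻¹ :=
    Matrix.coe_units_inv v
  have hmul : V * V⁻¹ = 1 := Matrix.mul_nonsing_inv V (Matrix.isUnit_det_of_invertible V)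
  constructor
  · intro i
    have h1 : (V * V⁻¹) i i = 1 := by rw [hmul, Matrix.one_apply_eq]
    rw [Matrix.mul_apply] at h1
    have h2 : ∑ k, V i k * V⁻¹ k i = V i i * V⁻¹ i i := by
      refine Finset.sum_eq_single i ?_ ?_
      · intro k _ hk
        rcases lt_or_gt_of_ne hk with h | h
        · exact mul_eq_zero_of_left (hbt h) _
        · exact mul_eq_zero_of_right _ (hbti h)
      · intro h; exact absurd (Finset.mem_univ i) h
    rw [h2, show V i i = 1 from hv.1 i, one_mul] at h1
    rw [hcoe]; exact h1
  · intro i j hij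
    rw [hcoe]; exact hbti hij

private lemma iw_entry_eq_det_minor {p : ℕ} [Fact p.Prime] {n : ℕ}
    {L V M : Matrix (Fin n) (Fin n) ℚ_[p]}
    (hM : M = L * V)
    (hL0 : ∀ i j : Fin n, i < j → L i j = 0) (hL1 : ∀ i, L i i = 1)
    (hV0 : ∀ i j : Fin n, j < i → V i j = 0) (hV1 : ∀ i, V i i = 1)
    (i j : Fin n) (hij : j < i) :
    L i j = (M.submatrix
      (fun t : Fin ((j : ℕ) + 1) => if (t : ℕ) = (j : ℕ) then i else Fin.castLE j.2 t)
      (fun t : Fin ((j : ℕ) + 1) => Fin.castLE j.2 t)).det := by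
  set c : Fin ((j : ℕ) + 1) → Fin n := fun t => Fin.castLE j.2 t with hc
  set r : Fin ((j : ℕ) + 1) → Fin n := fun t => if (t : ℕ) = (j : ℕ) then i else c t with hr
  have hcb : ∀ b : Fin ((j : ℕ) + 1), ((c b : Fin n) : ℕ) = (b : ℕ) := fun b => rfl
  have hsub : M.submatrix r c = (L.submatrix r c) * (V.submatrix c c) := by
    ext a b
    rw [Matrix.submatrix_apply, hM, Matrix.mul_apply, Matrix.mul_apply]
    simp only [Matrix.submatrix_apply]
    rw [show (∑ t : Fin ((j : ℕ) + 1), L (r a) (c t) * V (c t) (c b))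
        = ∑ k ∈ Finset.univ.map (Fin.castLEEmb j.2), L (r a) k * V k (c b) by
      rw [Finset.sum_map]; rfl]
    refine (Finset.sum_subset (Finset.subset_univ _) ?_).symm
    intro k _ hk
    have hkj : (j : ℕ) < (k : ℕ) := by
      by_contra hle
      push_neg at hle
      exact hk (Finset.mem_map.mpr ⟨⟨(k : ℕ), by omega⟩, Finset.mem_univ _, by ext; simp⟩)
    have hlt : (c b) < k := by
      have hb : (b : ℕ) ≤ (j : ℕ) := Nat.lt_succ_iff.mp b.2
      simp only [Fin.lt_def, hcb]
      omega
    exact mul_eq_zero_of_right _ (hV0 k (c b) hlt)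
  have hVt : (V.submatrix c c).BlockTriangular id := by
    intro a b hab
    refine hV0 (c a) (c b) ?_
    simp only [Fin.lt_def, hcb]
    exact hab
  have hVdet : (V.submatrix c c).det = 1 := by
    rw [Matrix.det_of_upperTriangular hVt]
    exact Finset.prod_eq_one fun t _ => hV1 (c t)
  have hLt : (L.submatrix r c).BlockTriangular OrderDual.toDual := by
    intro a b hab
    have hab' : a < b := hab
    have haj : (a : ℕ) < (j : ℕ) := by
      have hb2 := b.2
      have := Fin.lt_def.mp hab'
      omega
    simp only [Matrix.submatrix_apply, hr]
    rw [if_neg (by omega)]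
    refine hL0 (c a) (c b) ?_
    simp only [Fin.lt_def, hcb]
    exact Fin.lt_def.mp hab'
  have hLdet : (L.submatrix r c).det = L i j := by
    rw [Matrix.det_of_lowerTriangular _ hLt, Fin.prod_univ_castSucc]
    have h1 : ∀ t : Fin (j : ℕ), (L.submatrix r c) t.castSucc t.castSucc = 1 := by
      intro t
      have ht : ((t.castSucc : Fin ((j : ℕ) + 1)) : ℕ) ≠ (j : ℕ) := by
        simp only [Fin.coe_castSucc]
        omega
      simp only [Matrix.submatrix_apply, hr]
      rw [if_neg ht]
      exact hL1 _
    rw [Finset.prod_congr rfl (fun t _ => h1 t), Finset.prod_const_one, one_mul]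
    have hrl : r (Fin.last (j : ℕ)) = i := by
      simp only [hr]
      rw [if_pos (by simp)]
    have hcl : c (Fin.last (j : ℕ)) = j := by
      ext
      simp [hc]
    rw [Matrix.submatrix_apply, hrl, hcl]
  rw [hsub, Matrix.det_mul, hVdet, hLdet, mul_one]

private lemma iw_pow_prod_le_one {p : ℕ} [Fact p.Prime] {m : Type*} [Fintype m]
    (e1 e2 : m → ℤ) (h : (∑ t, e1 t) + (∑ t, e2 t) ≤ 0) :
    (∏ t, (p : ℝ) ^ (e1 t)) * (∏ t, (p : ℝ) ^ (e2 t)) ≤ 1 := by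
  have hppos : (0 : ℝ) < (p : ℝ) := by exact_mod_cast (Fact.out : p.Prime).pos
  have hp1 : (1 : ℝ) ≤ (p : ℝ) := by exact_mod_cast (Fact.out : p.Prime).one_le
  rw [iw_prod_zpow_sum hppos.ne' _ _, iw_prod_zpow_sum hppos.ne' _ _, ← zpow_add₀ hppos.ne']
  exact zpow_le_one_of_nonpos₀ hp1 h


end IwahoriAux

set_option maxHeartbeats 1000000 in
open Pointwise in
/-- **Iwahori Approximation** (Proposition 4.2, type `A_{n−1}` instance): for fixed `w, μ`
and all sufficiently regular dominant `λ`,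
`I⁻·π^{λ}·U⁻ ∩ I⁻·w·π^{λ−μ}·U⁺ = I⁻·π^{λ}·U⁻_O ∩ I⁻·w·π^{λ−μ}·U⁺`. -/
theorem iwahori_approximation (p : ℕ) [Fact p.Prime] (n : ℕ) (hn : 2 ≤ n)
    (w : Equiv.Perm (Fin n)) (μ : Fin n → ℤ) :
    ∃ N : ℕ, ∀ lam : Fin n → ℤ,
      (∀ i j : Fin n, (j : ℕ) = (i : ℕ) + 1 → (N : ℤ) ≤ lam i - lam j) →
      (Iminus p n * {piPow p n lam} * Uminus p n) ∩
          (Iminus p n * {permGL p n w * piPow p n (fun i => lam i - μ i)} * Uplus p n) =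
        (Iminus p n * {piPow p n lam} * (Uminus p n ∩ Kgp p n)) ∩
          (Iminus p n * {permGL p n w * piPow p n (fun i => lam i - μ i)} * Uplus p n) := by
  classical
  have hppos : (0 : ℝ) < (p : ℝ) := by exact_mod_cast (Fact.out : p.Prime).pos
  refine ⟨∑ i, (μ i).natAbs, ?_⟩
  intro lam hlam
  set N : ℕ := ∑ i, (μ i).natAbs with hN
  have hchain : ∀ d : ℕ, ∀ i j : Fin n, (i : ℕ) = (j : ℕ) + d + 1 →
      (N : ℤ) ≤ lam j - lam i := by
    intro d
    induction d with
    | zero => exact fun i j h => hlam j i (by omega)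
    | succ d ih =>
      intro i j h
      have hj1 : (j : ℕ) + 1 < n := by have := i.2; omega
      have h1 : (N : ℤ) ≤ lam j - lam ⟨(j : ℕ) + 1, hj1⟩ := hlam j ⟨(j : ℕ) + 1, hj1⟩ rfl
      have h2 : (N : ℤ) ≤ lam ⟨(j : ℕ) + 1, hj1⟩ - lam i := ih i ⟨(j : ℕ) + 1, hj1⟩ (by simp; omega)
      have hN0 : (0 : ℤ) ≤ (N : ℤ) := Int.natCast_nonneg N
      omega
  have hgap : ∀ i j : Fin n, (j : ℕ) < (i : ℕ) → (N : ℤ) ≤ lam j - lam i := fun i j h =>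
    hchain ((i : ℕ) - (j : ℕ) - 1) i j (by omega)
  ext x
  simp only [Set.mem_inter_iff]
  constructor
  swap
  · rintro ⟨h1, h2⟩
    exact ⟨Set.mul_subset_mul_left Set.inter_subset_left h1, h2⟩
  rintro ⟨h1, h2⟩
  refine ⟨?_, h2⟩
  rw [Set.mem_mul] at h1
  obtain ⟨y, hy, u, huU, hxu⟩ := h1
  rw [Set.mem_mul] at hy
  obtain ⟨a, haI, t, ht, hyt⟩ := hy
  rw [Set.mem_singleton_iff] at ht
  subst ht
  rw [Set.mem_mul] at h2
  obtain ⟨z, hz, v, hvU, hxv⟩ := h2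
  rw [Set.mem_mul] at hz
  obtain ⟨b, hbI, t2, ht2, hzt⟩ := hz
  rw [Set.mem_singleton_iff] at ht2
  subst ht2
  have key : a * piPow p n lam * u
      = b * (permGL p n w * piPow p n (fun i => lam i - μ i)) * v := by
    rw [hyt, hzt, hxu, hxv]
  have hk : a⁻¹ * b ∈ Kgp p n := iw_Kgp_mul (iw_Kgp_inv haI.1) hbI.1
  have hMgl : u * v⁻¹ = (piPow p n lam)⁻¹ * (a⁻¹ * b *
      (permGL p n w * piPow p n (fun i => lam i - μ i))) := by
    have h1 : u = (piPow p n lam)⁻¹ * (a⁻¹ *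
        (b * (permGL p n w * piPow p n (fun i => lam i - μ i)) * v)) := by
      rw [← key]; group
    rw [h1]; group
  set Mmat : Matrix (Fin n) (Fin n) ℚ_[p] :=
    ((u * v⁻¹ : GL (Fin n) ℚ_[p]) : Matrix (Fin n) (Fin n) ℚ_[p]) with hMmat
  have hMfact : Mmat = ((u : GL (Fin n) ℚ_[p]) : Matrix (Fin n) (Fin n) ℚ_[p]) *
      (((v⁻¹ : GL (Fin n) ℚ_[p]) : Matrix (Fin n) (Fin n) ℚ_[p])) := Units.val_mul u v⁻¹
  have hMentry : ∀ s t2 : Fin n, Mmat s t2 = (p : ℚ_[p]) ^ (-lam s) *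
      (((a⁻¹ * b : GL (Fin n) ℚ_[p]) : Matrix (Fin n) (Fin n) ℚ_[p]) s (w t2)) *
      (p : ℚ_[p]) ^ (lam t2 - μ t2) := by
    intro s t2
    rw [hMmat, hMgl]
    simp only [Units.val_mul]
    rw [show (((piPow p n lam)⁻¹ : GL (Fin n) ℚ_[p]) : Matrix (Fin n) (Fin n) ℚ_[p])
      = diagonal (fun i => (p : ℚ_[p]) ^ (-lam i)) from rfl]
    rw [show ((piPow p n (fun i => lam i - μ i) : GL (Fin n) ℚ_[p]) :
        Matrix (Fin n) (Fin n) ℚ_[p])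
      = diagonal (fun i => (p : ℚ_[p]) ^ (lam i - μ i)) from rfl]
    rw [show ((permGL p n w : GL (Fin n) ℚ_[p]) : Matrix (Fin n) (Fin n) ℚ_[p])
      = (w⁻¹).toPEquiv.toMatrix from rfl]
    rw [PEquiv.toMatrix_toPEquiv_mul]
    rw [Matrix.diagonal_mul, Matrix.mul_apply]
    rw [Finset.sum_eq_single (w t2)]
    · rw [Matrix.submatrix_apply, Matrix.diagonal_apply, if_pos (by simp), mul_assoc]
      simp
    · intro k _ hk2
      rw [Matrix.submatrix_apply, Matrix.diagonal_apply, if_neg, mul_zero]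
      intro hcon
      exact hk2 (by simpa using congrArg w hcon)
    · intro h; exact absurd (Finset.mem_univ _) h
  have hMnorm : ∀ s t2 : Fin n,
      ‖Mmat s t2‖ ≤ (p : ℝ) ^ (lam s) * (p : ℝ) ^ (μ t2 - lam t2) := by
    intro s t2
    rw [hMentry s t2, norm_mul, norm_mul, Padic.norm_p_zpow, Padic.norm_p_zpow,
      neg_neg, neg_sub]
    have hk1 : ‖((a⁻¹ * b : GL (Fin n) ℚ_[p]) : Matrix (Fin n) (Fin n) ℚ_[p]) s (w t2)‖ ≤ 1 :=
      hk.1 _ _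
    have hnn : (0 : ℝ) ≤ (p : ℝ) ^ (lam s) * (p : ℝ) ^ (μ t2 - lam t2) :=
      mul_nonneg (zpow_pos hppos _).le (zpow_pos hppos _).le
    calc (p : ℝ) ^ (lam s) *
          ‖((a⁻¹ * b : GL (Fin n) ℚ_[p]) : Matrix (Fin n) (Fin n) ℚ_[p]) s (w t2)‖ *
          (p : ℝ) ^ (μ t2 - lam t2)
        = ((p : ℝ) ^ (lam s) * (p : ℝ) ^ (μ t2 - lam t2)) *
            ‖((a⁻¹ * b : GL (Fin n) ℚ_[p]) : Matrix (Fin n) (Fin n) ℚ_[p]) s (w t2)‖ := by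
          ring
      _ ≤ ((p : ℝ) ^ (lam s) * (p : ℝ) ^ (μ t2 - lam t2)) * 1 :=
          mul_le_mul_of_nonneg_left hk1 hnn
      _ = (p : ℝ) ^ (lam s) * (p : ℝ) ^ (μ t2 - lam t2) := mul_one _
  clear_value Mmat
  have hvinv := iw_Uplus_inv hvU
  have huK : u ∈ Kgp p n := by
    constructor
    · intro i2 j2
      rcases lt_trichotomy i2 j2 with hlt | heq | hgt2
      · rw [huU.2 i2 j2 hlt, norm_zero]; exact zero_le_one
      · rw [heq, huU.1 j2]; simp
      · have hminor := iw_entry_eq_det_minor hMfact huU.2 huU.1 hvinv.2 hvinv.1 i2 j2 hgt2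
        rw [hminor]
        have hineq := iw_norm_det_le
          (Mmat.submatrix
            (fun t : Fin ((j2 : ℕ) + 1) => if (t : ℕ) = (j2 : ℕ) then i2 else Fin.castLE j2.2 t)
            (fun t : Fin ((j2 : ℕ) + 1) => Fin.castLE j2.2 t))
          (fun t => (p : ℝ) ^ (lam (if (t : ℕ) = (j2 : ℕ) then i2 else Fin.castLE j2.2 t)))
          (fun t => (p : ℝ) ^ (μ (Fin.castLE j2.2 t) - lam (Fin.castLE j2.2 t)))
          (fun t => (zpow_pos hppos _).le) (fun t => (zpow_pos hppos _).le)
          (fun a2 b2 => by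
            simp only [Matrix.submatrix_apply]
            exact hMnorm _ _)
        refine le_trans hineq (iw_pow_prod_le_one _ _ ?_)
        have hS1 : (∑ t : Fin ((j2 : ℕ) + 1),
              lam (if (t : ℕ) = (j2 : ℕ) then i2 else Fin.castLE j2.2 t))
            = (∑ t : Fin (j2 : ℕ), lam (Fin.castLE j2.2 t.castSucc)) + lam i2 := by
          rw [Fin.sum_univ_castSucc]
          congr 1
          · refine Finset.sum_congr rfl fun t _ => ?_
            rw [if_neg (by simpa using t.2.ne)]
          · rw [if_pos (by simp)]
        have hS2 : (∑ t : Fin ((j2 : ℕ) + 1), lam (Fin.castLE j2.2 t))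
            = (∑ t : Fin (j2 : ℕ), lam (Fin.castLE j2.2 t.castSucc)) + lam j2 := by
          rw [Fin.sum_univ_castSucc]
          congr 1
        have hS3 : (∑ t : Fin ((j2 : ℕ) + 1), μ (Fin.castLE j2.2 t)) ≤ (N : ℤ) := by
          calc (∑ t : Fin ((j2 : ℕ) + 1), μ (Fin.castLE j2.2 t))
              ≤ ∑ t : Fin ((j2 : ℕ) + 1), ((μ (Fin.castLE j2.2 t)).natAbs : ℤ) :=
                Finset.sum_le_sum fun t _ => Int.le_natAbs
            _ = ∑ k ∈ Finset.univ.map (Fin.castLEEmb j2.2), ((μ k).natAbs : ℤ) := by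
                rw [Finset.sum_map]; rfl
            _ ≤ ∑ k : Fin n, ((μ k).natAbs : ℤ) :=
                Finset.sum_le_sum_of_subset_of_nonneg (Finset.subset_univ _)
                  (fun _ _ _ => Int.natCast_nonneg _)
            _ = (N : ℤ) := by rw [hN]; push_cast; rfl
        have hS4 : (∑ t : Fin ((j2 : ℕ) + 1),
              (μ (Fin.castLE j2.2 t) - lam (Fin.castLE j2.2 t)))
            = (∑ t : Fin ((j2 : ℕ) + 1), μ (Fin.castLE j2.2 t))
              - (∑ t : Fin ((j2 : ℕ) + 1), lam (Fin.castLE j2.2 t)) :=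
          Finset.sum_sub_distrib _ _
        have hg2 : (N : ℤ) ≤ lam j2 - lam i2 := hgap i2 j2 (Fin.lt_def.mp hgt2)
        rw [hS1, hS4, hS2]
        linarith
    · have hdet : ((u : GL (Fin n) ℚ_[p]) : Matrix (Fin n) (Fin n) ℚ_[p]).det = 1 := by
        rw [Matrix.det_of_lowerTriangular _ (fun i2 j2 h => huU.2 i2 j2 h)]
        exact Finset.prod_eq_one fun i2 _ => huU.1 i2
      rw [hdet, norm_one]
  rw [← hxu, ← hyt]
  exact Set.mul_mem_mul (Set.mul_mem_mul haI (Set.mem_singleton _)) ⟨huU, huK⟩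
end

section
/- (Statement (P1) in the proof of Proposition 4.2, type A_{n−1} instance.) Fix w ∈ S_n and μ ∈ ℤⁿ. There exists N ∈ ℕ such that for every λ = (λ_1,…,λ_n) ∈ ℤⁿ with λ_i − λ_{i+1} ≥ N for all 1 ≤ i ≤ n−1, the following holds: if u⁻ ∈ U⁻ satisfies π^{λ}·u⁻ ∈ U⁺_{w,π}·w·π^{λ−μ}·U⁺, then u⁻ ∈ U⁻ ∩ K. -/
open Matrix Pointwise

section AuxLemmas

open IsUltrametricDist

/-- A product of integer powers of a nonzero real is the power of the sum. -/
private lemma aux_prod_zpow (a : ℝ) (ha : a ≠ 0) {α : Type*} (s : Finset α) (f : α → ℤ) :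
    ∏ x ∈ s, a ^ f x = a ^ (∑ x ∈ s, f x) := by
  classical
  induction s using Finset.cons_induction with
  | empty => simp
  | cons x s hx ih => rw [Finset.prod_cons, Finset.sum_cons, ih, ← zpow_add₀ ha]

/-- Determinant of a `p`-adic matrix with entries of norm at most one has norm at most one. -/
private lemma aux_norm_det_le_one {p : ℕ} [Fact p.Prime] {k : ℕ}
    (M : Matrix (Fin k) (Fin k) ℚ_[p]) (h : ∀ i j, ‖M i j‖ ≤ 1) : ‖M.det‖ ≤ 1 := by
  rw [Matrix.det_apply]
  refine norm_sum_le_of_forall_le_of_nonneg zero_le_one fun σ _ => ?_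
  have hs : ‖Equiv.Perm.sign σ • ∏ i, M (σ i) i‖ = ‖∏ i, M (σ i) i‖ := by
    rcases Int.units_eq_one_or (Equiv.Perm.sign σ) with h1 | h1 <;>
      simp [h1, Units.smul_def]
  rw [hs, norm_prod]
  exact Finset.prod_le_one (fun i _ => norm_nonneg _) fun i _ => h _ _

/-- Telescoping the simple-gap hypothesis. -/
private lemma aux_gap {n N : ℕ} {lam : Fin n → ℤ}
    (h : ∀ i j : Fin n, (j : ℕ) = (i : ℕ) + 1 → (N : ℤ) ≤ lam i - lam j) :
    ∀ i j : Fin n, (i : ℕ) < (j : ℕ) → (N : ℤ) ≤ lam i - lam j := by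
  intro i j hij
  suffices H : ∀ d : ℕ, ∀ j : Fin n, (j : ℕ) = (i : ℕ) + 1 + d → (N : ℤ) ≤ lam i - lam j by
    exact H ((j : ℕ) - (i : ℕ) - 1) j (by omega)
  intro d
  induction d with
  | zero => intro j hj; exact h i j (by omega)
  | succ d ih =>
    intro j hj
    have hj' : (i : ℕ) + 1 + d < n := by have := j.isLt; omega
    have h1 : (N : ℤ) ≤ lam i - lam ⟨(i : ℕ) + 1 + d, hj'⟩ := ih ⟨_, hj'⟩ rfl
    have h2 : (N : ℤ) ≤ lam ⟨(i : ℕ) + 1 + d, hj'⟩ - lam j := by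
      refine h ⟨_, hj'⟩ j ?_
      simp only [Fin.val_mk]
      omega
    have hN : (0 : ℤ) ≤ (N : ℤ) := Int.natCast_nonneg N
    omega

end AuxLemmas

open Pointwise in
/-- **Statement (P1)** from the proof of Proposition 4.2 (type `A_{n−1}` instance): for fixed
`w, μ` and all sufficiently regular dominant `λ`, if `u⁻ ∈ U⁻` satisfies
`π^{λ}·u⁻ ∈ U⁺_{w,π}·w·π^{λ−μ}·U⁺`, then `u⁻ ∈ U⁻ ∩ K`. -/
theorem statement_P1 (p : ℕ) [Fact p.Prime] (n : ℕ) (hn : 2 ≤ n)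
    (w : Equiv.Perm (Fin n)) (μ : Fin n → ℤ) :
    ∃ N : ℕ, ∀ lam : Fin n → ℤ,
      (∀ i j : Fin n, (j : ℕ) = (i : ℕ) + 1 → (N : ℤ) ≤ lam i - lam j) →
      ∀ um ∈ Uminus p n,
        piPow p n lam * um ∈
            UplusWpi p n w * {permGL p n w * piPow p n (fun i => lam i - μ i)} * Uplus p n →
          um ∈ Uminus p n ∩ Kgp p n := by
  classical
  refine ⟨1 + ∑ x : Fin n, (μ x).natAbs, ?_⟩
  intro lam hlam um hum hmem
  have hpprime : p.Prime := Fact.out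
  have hp0 : (0 : ℝ) < (p : ℝ) := by exact_mod_cast hpprime.pos
  have hp1 : (1 : ℝ) ≤ (p : ℝ) := by exact_mod_cast hpprime.one_lt.le
  -- destructure the membership in the triple product
  rw [Set.mem_mul] at hmem
  obtain ⟨a, ha, vp, hvp, hav⟩ := hmem
  rw [Set.mem_mul] at ha
  obtain ⟨up, hup, x, hx, hux⟩ := ha
  rw [Set.mem_singleton_iff] at hx
  subst hx
  obtain ⟨hupU, hupZ, hupW⟩ := hup
  obtain ⟨hvpd, hvpu⟩ := hvp
  rw [← hux] at hav
  -- pass to a matrix identity P * Q = π^λ * um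
  have hEq := congrArg Units.val hav
  simp only [Units.val_mul, mul_assoc] at hEq
  set P : Matrix (Fin n) (Fin n) ℚ_[p] := (up : Matrix (Fin n) (Fin n) ℚ_[p]) *
    (permGL p n w : Matrix (Fin n) (Fin n) ℚ_[p]) with hP
  set Q : Matrix (Fin n) (Fin n) ℚ_[p] :=
    (piPow p n (fun i => lam i - μ i) : Matrix (Fin n) (Fin n) ℚ_[p]) *
      (vp : Matrix (Fin n) (Fin n) ℚ_[p]) with hQ
  have hPQ : P * Q = (piPow p n lam : Matrix (Fin n) (Fin n) ℚ_[p]) *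
      (um : Matrix (Fin n) (Fin n) ℚ_[p]) := by
    rw [hP, hQ, mul_assoc]
    exact hEq
  -- entry formulas
  have hQ_apply : ∀ l s : Fin n,
      Q l s = (p : ℚ_[p]) ^ (lam l - μ l) * (vp : Matrix (Fin n) (Fin n) ℚ_[p]) l s := by
    intro l s
    rw [hQ]
    show (Matrix.diagonal (fun i => (p : ℚ_[p]) ^ (lam i - μ i)) *
      (vp : Matrix (Fin n) (Fin n) ℚ_[p])) l s = _
    rw [Matrix.diagonal_mul]
  have hM_apply : ∀ l s : Fin n,
      ((piPow p n lam : Matrix (Fin n) (Fin n) ℚ_[p]) *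
        (um : Matrix (Fin n) (Fin n) ℚ_[p])) l s
      = (p : ℚ_[p]) ^ (lam l) * (um : Matrix (Fin n) (Fin n) ℚ_[p]) l s := by
    intro l s
    show (Matrix.diagonal (fun i => (p : ℚ_[p]) ^ (lam i)) *
      (um : Matrix (Fin n) (Fin n) ℚ_[p])) l s = _
    rw [Matrix.diagonal_mul]
  -- the entries of `up` and of the permutation matrix have norm at most 1
  have hup_le : ∀ a b : Fin n, ‖(up : Matrix (Fin n) (Fin n) ℚ_[p]) a b‖ ≤ 1 := by
    intro a b
    have h1 : (up : Matrix (Fin n) (Fin n) ℚ_[p]) a b =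
        ((up : Matrix (Fin n) (Fin n) ℚ_[p]) - 1) a b +
          (1 : Matrix (Fin n) (Fin n) ℚ_[p]) a b := by
      simp
    rw [h1]
    refine le_trans (IsUltrametricDist.norm_add_le_max _ _) (max_le ?_ ?_)
    · refine le_trans (hupZ a b) ?_
      rw [inv_le_one_iff₀]
      right; exact hp1
    · by_cases hab : a = b <;> simp [Matrix.one_apply, hab]
  have hW_le : ∀ a b : Fin n, ‖(permGL p n w : Matrix (Fin n) (Fin n) ℚ_[p]) a b‖ ≤ 1 := by
    intro a b
    show ‖((w⁻¹).permMatrix ℚ_[p]) a b‖ ≤ 1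
    rw [Equiv.Perm.permMatrix, PEquiv.toMatrix_apply]
    split <;> simp
  have hP_le : ∀ a b : Fin n, ‖P a b‖ ≤ 1 := by
    intro a b
    rw [hP, Matrix.mul_apply]
    refine IsUltrametricDist.norm_sum_le_of_forall_le_of_nonneg zero_le_one fun r _ => ?_
    rw [norm_mul]
    calc ‖(up : Matrix (Fin n) (Fin n) ℚ_[p]) a r‖ *
          ‖(permGL p n w : Matrix (Fin n) (Fin n) ℚ_[p]) r b‖
        ≤ 1 * 1 := mul_le_mul (hup_le a r) (hW_le r b) (norm_nonneg _) zero_le_one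
      _ = 1 := mul_one 1
  -- the key bound on the strictly lower entries of `um`
  have key : ∀ i j : Fin n, j < i → ‖(um : Matrix (Fin n) (Fin n) ℚ_[p]) i j‖ ≤ 1 := by
    intro i j hij
    have hkn : (j : ℕ) + 1 ≤ n := j.isLt
    set c : Fin ((j : ℕ) + 1) → Fin n := Fin.castLE hkn with hc
    set t : Fin ((j : ℕ) + 1) → Fin n :=
      fun r => if hr : (r : ℕ) < (j : ℕ) then ⟨(r : ℕ), hr.trans j.isLt⟩ else i with ht
    set lst : Fin ((j : ℕ) + 1) := ⟨(j : ℕ), Nat.lt_succ_self _⟩ with hlst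
    have hcval : ∀ s : Fin ((j : ℕ) + 1), ((c s : Fin n) : ℕ) = (s : ℕ) := fun s => rfl
    have htc : ∀ r : Fin ((j : ℕ) + 1), r ≠ lst → (r : ℕ) < (j : ℕ) := by
      intro r hr
      have h1 : (r : ℕ) < (j : ℕ) + 1 := r.isLt
      have h2 : (r : ℕ) ≠ (j : ℕ) := by
        intro hcon
        exact hr (Fin.ext (by rw [hcon, hlst]))
      omega
    have htc' : ∀ r : Fin ((j : ℕ) + 1), r ≠ lst → t r = c r := by
      intro r hr
      have hrj := htc r hr
      refine Fin.ext ?_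
      rw [ht, hcval]
      simp [hrj]
    have htlst : t lst = i := by
      rw [ht]
      simp [hlst]
    have hclst : c lst = j := by
      refine Fin.ext ?_
      rw [hcval, hlst]
    -- the submatrix of π^λ·um on rows t, columns c, is lower triangular
    have hMsub_tri : ∀ r s : Fin ((j : ℕ) + 1), r < s →
        ((piPow p n lam : Matrix (Fin n) (Fin n) ℚ_[p]) *
          (um : Matrix (Fin n) (Fin n) ℚ_[p])) (t r) (c s) = 0 := by
      intro r s hrs
      have hrs' : (r : ℕ) < (s : ℕ) := hrs
      have hsj : (s : ℕ) ≤ (j : ℕ) := Nat.lt_succ_iff.mp s.isLt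
      have hrj : (r : ℕ) < (j : ℕ) := lt_of_lt_of_le hrs' hsj
      have htr : ((t r : Fin n) : ℕ) = (r : ℕ) := by rw [ht]; simp [hrj]
      have hlt : (t r) < (c s) := by
        rw [Fin.lt_def, htr, hcval]
        exact hrs'
      rw [hM_apply, hum.2 (t r) (c s) hlt, mul_zero]
    have hdetL : (((piPow p n lam : Matrix (Fin n) (Fin n) ℚ_[p]) *
          (um : Matrix (Fin n) (Fin n) ℚ_[p])).submatrix t c).det
        = ∏ r : Fin ((j : ℕ) + 1),
            ((piPow p n lam : Matrix (Fin n) (Fin n) ℚ_[p]) *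
              (um : Matrix (Fin n) (Fin n) ℚ_[p])) (t r) (c r) := by
      rw [Matrix.det_of_lowerTriangular
        (((piPow p n lam : Matrix (Fin n) (Fin n) ℚ_[p]) *
          (um : Matrix (Fin n) (Fin n) ℚ_[p])).submatrix t c)
        (fun a b hab => hMsub_tri a b (by simpa using hab))]
      simp [Matrix.submatrix_apply]
    -- norm of the left-hand side determinant
    have hnormL : ‖(((piPow p n lam : Matrix (Fin n) (Fin n) ℚ_[p]) *
          (um : Matrix (Fin n) (Fin n) ℚ_[p])).submatrix t c).det‖
        = (∏ r : Fin ((j : ℕ) + 1), (p : ℝ) ^ (-(lam (t r)))) *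
            ‖(um : Matrix (Fin n) (Fin n) ℚ_[p]) i j‖ := by
      rw [hdetL, norm_prod]
      have hterm : ∀ r : Fin ((j : ℕ) + 1),
          ‖((piPow p n lam : Matrix (Fin n) (Fin n) ℚ_[p]) *
            (um : Matrix (Fin n) (Fin n) ℚ_[p])) (t r) (c r)‖
          = (p : ℝ) ^ (-(lam (t r))) * ‖(um : Matrix (Fin n) (Fin n) ℚ_[p]) (t r) (c r)‖ := by
        intro r
        rw [hM_apply, norm_mul, Padic.norm_p_zpow]
      rw [Finset.prod_congr rfl (fun r _ => hterm r), Finset.prod_mul_distrib]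
      congr 1
      rw [Fintype.prod_eq_single lst (fun r hr => by
        rw [htc' r hr, hum.1 (c r), norm_one])]
      rw [htlst, hclst]
    -- the submatrix factors through P and Q
    have hsub_eq : (((piPow p n lam : Matrix (Fin n) (Fin n) ℚ_[p]) *
          (um : Matrix (Fin n) (Fin n) ℚ_[p])).submatrix t c)
        = (P.submatrix t c) * (Q.submatrix c c) := by
      rw [← hPQ]
      ext r s
      rw [Matrix.submatrix_apply, Matrix.mul_apply, Matrix.mul_apply]
      have hvan : ∀ l ∈ (Finset.univ : Finset (Fin n)),
          l ∉ Finset.univ.map ⟨c, Fin.castLE_injective hkn⟩ →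
            P (t r) l * Q l (c s) = 0 := by
        intro l _ hl
        have hlk : ¬ ((l : ℕ) < (j : ℕ) + 1) := by
          intro hcon
          refine hl ?_
          rw [Finset.mem_map]
          exact ⟨⟨(l : ℕ), hcon⟩, Finset.mem_univ _, Fin.ext rfl⟩
        have hcs : (c s) < l := by
          rw [Fin.lt_def, hcval]
          have := Nat.lt_succ_iff.mp s.isLt
          omega
        rw [hQ_apply, hvpu l (c s) hcs, mul_zero, mul_zero]
      calc ∑ l : Fin n, P (t r) l * Q l (c s)
          = ∑ l ∈ Finset.univ.map ⟨c, Fin.castLE_injective hkn⟩,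
              P (t r) l * Q l (c s) :=
            (Finset.sum_subset (Finset.subset_univ _) hvan).symm
        _ = ∑ l : Fin ((j : ℕ) + 1), P (t r) (c l) * Q (c l) (c s) := by
            rw [Finset.sum_map]
            rfl
    -- determinant of the Q part
    have hQsub_tri : ∀ a b : Fin ((j : ℕ) + 1), b < a → (Q.submatrix c c) a b = 0 := by
      intro a b hab
      rw [Matrix.submatrix_apply, hQ_apply, hvpu (c a) (c b)
        (by rw [Fin.lt_def, hcval, hcval]; exact hab), mul_zero]
    have hdetQ : (Q.submatrix c c).det
        = ∏ s : Fin ((j : ℕ) + 1), (p : ℚ_[p]) ^ (lam (c s) - μ (c s)) := by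
      rw [Matrix.det_of_upperTriangular (fun a b hab => hQsub_tri a b (by simpa using hab))]
      refine Finset.prod_congr rfl fun s _ => ?_
      rw [Matrix.submatrix_apply, hQ_apply, hvpd (c s), mul_one]
    have hnormQ : ‖(Q.submatrix c c).det‖
        = ∏ s : Fin ((j : ℕ) + 1), (p : ℝ) ^ (-(lam (c s) - μ (c s))) := by
      rw [hdetQ, norm_prod]
      exact Finset.prod_congr rfl fun s _ => Padic.norm_p_zpow _
    -- putting the two computations together
    have hmain : (∏ r : Fin ((j : ℕ) + 1), (p : ℝ) ^ (-(lam (t r)))) *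
          ‖(um : Matrix (Fin n) (Fin n) ℚ_[p]) i j‖
        ≤ ∏ s : Fin ((j : ℕ) + 1), (p : ℝ) ^ (-(lam (c s) - μ (c s))) := by
      rw [← hnormL, ← hnormQ, hsub_eq, Matrix.det_mul, norm_mul]
      have h1 : ‖(P.submatrix t c).det‖ ≤ 1 :=
        aux_norm_det_le_one _ (fun a b => hP_le (t a) (c b))
      calc ‖(P.submatrix t c).det‖ * ‖(Q.submatrix c c).det‖
          ≤ 1 * ‖(Q.submatrix c c).det‖ :=
            mul_le_mul_of_nonneg_right h1 (norm_nonneg _)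
        _ = ‖(Q.submatrix c c).det‖ := one_mul _
    -- convert the products to powers of p
    have hpne : (p : ℝ) ≠ 0 := ne_of_gt hp0
    rw [aux_prod_zpow _ hpne, aux_prod_zpow _ hpne] at hmain
    set X : ℤ := ∑ r : Fin ((j : ℕ) + 1), (-(lam (t r))) with hX
    set Y : ℤ := ∑ s : Fin ((j : ℕ) + 1), (-(lam (c s) - μ (c s))) with hY
    -- exponent comparison
    have hsum1 : ∑ r : Fin ((j : ℕ) + 1), (lam (t r) - lam (c r)) = lam i - lam j := by
      rw [Fintype.sum_eq_single lst (fun r hr => by rw [htc' r hr, sub_self])]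
      rw [htlst, hclst]
    have hsum2 : ∑ r : Fin ((j : ℕ) + 1), (lam (t r) - lam (c r))
        = ∑ r : Fin ((j : ℕ) + 1), lam (t r) - ∑ r : Fin ((j : ℕ) + 1), lam (c r) :=
      Finset.sum_sub_distrib _ _
    have hsum3 : ∑ s : Fin ((j : ℕ) + 1), (lam (c s) - μ (c s))
        = ∑ s : Fin ((j : ℕ) + 1), lam (c s) - ∑ s : Fin ((j : ℕ) + 1), μ (c s) :=
      Finset.sum_sub_distrib _ _
    have hXsum : X = - ∑ r : Fin ((j : ℕ) + 1), lam (t r) := by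
      rw [hX, Finset.sum_neg_distrib]
    have hYsum : Y = - ∑ s : Fin ((j : ℕ) + 1), (lam (c s) - μ (c s)) := by
      rw [hY, Finset.sum_neg_distrib]
    have hμbound : ∑ s : Fin ((j : ℕ) + 1), μ (c s) ≤ ∑ x : Fin n, |μ x| := by
      calc ∑ s : Fin ((j : ℕ) + 1), μ (c s)
          ≤ ∑ s : Fin ((j : ℕ) + 1), |μ (c s)| :=
            Finset.sum_le_sum fun s _ => le_abs_self _
        _ = ∑ x ∈ Finset.univ.map ⟨c, Fin.castLE_injective hkn⟩, |μ x| := by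
            rw [Finset.sum_map]
            rfl
        _ ≤ ∑ x : Fin n, |μ x| :=
            Finset.sum_le_sum_of_subset_of_nonneg (Finset.subset_univ _)
              (fun x _ _ => abs_nonneg _)
    have hNval : ((1 + ∑ x : Fin n, (μ x).natAbs : ℕ) : ℤ) = 1 + ∑ x : Fin n, |μ x| := by
      push_cast [Int.natCast_natAbs]
      ring
    have hgap : ((1 + ∑ x : Fin n, (μ x).natAbs : ℕ) : ℤ) ≤ lam j - lam i :=
      aux_gap hlam j i hij
    have hexp : Y - X ≤ 0 := by
      have : Y - X = (lam i - lam j) + ∑ s : Fin ((j : ℕ) + 1), μ (c s) := by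
        rw [hXsum, hYsum, hsum3]
        omega
      rw [this]
      rw [hNval] at hgap
      omega
    -- conclude
    have humnn : (0 : ℝ) ≤ ‖(um : Matrix (Fin n) (Fin n) ℚ_[p]) i j‖ := norm_nonneg _
    have h2 : ‖(um : Matrix (Fin n) (Fin n) ℚ_[p]) i j‖ ≤ (p : ℝ) ^ (Y - X) := by
      have h3 : (p : ℝ) ^ (-X) * ((p : ℝ) ^ X * ‖(um : Matrix (Fin n) (Fin n) ℚ_[p]) i j‖)
          ≤ (p : ℝ) ^ (-X) * (p : ℝ) ^ Y :=
        mul_le_mul_of_nonneg_left hmain (le_of_lt (zpow_pos hp0 _))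
      rw [← mul_assoc, ← zpow_add₀ hpne, neg_add_cancel, zpow_zero, one_mul,
        ← zpow_add₀ hpne] at h3
      rw [show Y - X = -X + Y by ring]
      exact h3
    refine le_trans h2 ?_
    exact zpow_le_one_of_nonpos₀ hp1 hexp
  -- assemble the conclusion
  refine ⟨hum, ?_, ?_⟩
  · intro a b
    rcases lt_trichotomy a b with h | h | h
    · rw [hum.2 a b h]; simp
    · subst h; rw [hum.1 a]; simp
    · exact key a b h
  · have hdet : (um : Matrix (Fin n) (Fin n) ℚ_[p]).det = 1 := by
      rw [Matrix.det_of_lowerTriangular (um : Matrix (Fin n) (Fin n) ℚ_[p])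
        (fun a b hab => hum.2 a b (by simpa using hab))]
      simp [hum.1]
    rw [hdet, norm_one]
end
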